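/- arXiv:1707.04922 — 8 statements merged into one kernel-verified Lean document; each statement's English description precedes it below -/
import Mathlib

section
/- Let Π ⊂ ℝ^n be a k-dimensional linear subspace and ν_1, ..., ν_k ∈ Π nonzero vectors such that for each i = 1, ..., k-1, the angle between the line x^i = span{ν_i} and the orthogonal complement (within ℝ^n) of span{ν_{i+1}, ..., ν_k} is at most ζ, for some ζ ∈ (0, π/2). Then there is a constant C = C_k(ζ) > 0 depending only on k and ζ such that for every A ∈ ℝ^n, |p_Π(A)| ≤ C·Σ_{i=1}^k |p_{x^i}(A)|, where p_Π and p_{x^i} denote orthogonal projections onto Π and onto the lines x^i respectively. -/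
open InnerProductGeometry

/-- The angle between the line spanned by a vector `v` and a linear subspace `W`
of `ℝⁿ`: the infimum of the angles between `v` and nonzero vectors of `W`. -/
noncomputable def lineSubspaceAngle {n : ℕ} (v : EuclideanSpace ℝ (Fin n))
    (W : Submodule ℝ (EuclideanSpace ℝ (Fin n))) : ℝ :=
  sInf {θ : ℝ | ∃ w ∈ W, w ≠ 0 ∧ θ = InnerProductGeometry.angle v w}

open Submodule
open scoped RealInnerProductSpace

variable {n : ℕ}

lemma step_ineq (c : ℝ) (hc : 0 < c) (v : EuclideanSpace ℝ (Fin n))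
    (P' : Submodule ℝ (EuclideanSpace ℝ (Fin n)))
    (hv : c * ‖v‖ ≤ ‖(orthogonalProjection P'ᗮ v : EuclideanSpace ℝ (Fin n))‖)
    (hv0 : v ≠ 0) (A : EuclideanSpace ℝ (Fin n)) :
    ‖(orthogonalProjection (Submodule.span ℝ {v} ⊔ P') A : EuclideanSpace ℝ (Fin n))‖ ≤
      (1 + 1/c) * ‖(orthogonalProjection P' A : EuclideanSpace ℝ (Fin n))‖ +
      (1/c) * ‖(orthogonalProjection (Submodule.span ℝ {v}) A : EuclideanSpace ℝ (Fin n))‖ := by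
  have hvn : 0 < ‖v‖ := norm_pos_iff.mpr hv0
  set v₁ : EuclideanSpace ℝ (Fin n) := v - orthogonalProjection P' v with hv₁def
  have hv₁mem : v₁ ∈ P'ᗮ := sub_starProjection_mem_orthogonal v
  have hv₁ : c * ‖v‖ ≤ ‖v₁‖ := by
    change c * ‖v‖ ≤ ‖(P'ᗮ).starProjection v‖ at hv
    rw [starProjection_orthogonal_val] at hv
    exact hv
  have hv₁pos : 0 < ‖v₁‖ := lt_of_lt_of_le (by positivity) hv₁
  set t : ℝ := (inner ℝ v₁ A : ℝ) / ‖v₁‖ ^ 2 with ht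
  set u : EuclideanSpace ℝ (Fin n) := (orthogonalProjection P' A : EuclideanSpace ℝ (Fin n)) + t • v₁ with hu
  have hv₁sup : v₁ ∈ Submodule.span ℝ {v} ⊔ P' := by
    apply Submodule.sub_mem
    · exact Submodule.mem_sup_left (Submodule.mem_span_singleton_self v)
    · exact Submodule.mem_sup_right (orthogonalProjection P' v).2
  have h2 : ∀ w₂ ∈ P', (inner ℝ (A - u) w₂ : ℝ) = 0 := by
    intro w₂ hw₂
    have e1 : (inner ℝ (A - (orthogonalProjection P' A : EuclideanSpace ℝ (Fin n))) w₂ : ℝ) = 0 :=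
      starProjection_inner_eq_zero A w₂ hw₂
    have e2 : (inner ℝ w₂ v₁ : ℝ) = 0 := hv₁mem w₂ hw₂
    have : A - u = (A - (orthogonalProjection P' A : EuclideanSpace ℝ (Fin n))) - t • v₁ := by
      rw [hu]; abel
    rw [this, inner_sub_left, real_inner_smul_left, e1, real_inner_comm w₂ v₁, e2]
    ring
  have hAu1 : (inner ℝ (A - u) v₁ : ℝ) = 0 := by
    have e3 : (inner ℝ (orthogonalProjection P' A : EuclideanSpace ℝ (Fin n)) v₁ : ℝ) = 0 :=
      hv₁mem _ (orthogonalProjection P' A).2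
    have hnz : ‖v₁‖ ^ 2 ≠ 0 := by positivity
    rw [inner_sub_left, hu, inner_add_left, e3, real_inner_smul_left,
      real_inner_self_eq_norm_sq, ht, real_inner_comm A v₁]
    field_simp
    ring
  have key : (orthogonalProjection (Submodule.span ℝ {v} ⊔ P') A : EuclideanSpace ℝ (Fin n)) = u := by
    show (Submodule.span ℝ {v} ⊔ P').starProjection A = u
    apply eq_starProjection_of_mem_of_inner_eq_zero
    · exact Submodule.add_mem _ (Submodule.mem_sup_right (orthogonalProjection P' A).2)
        (Submodule.smul_mem _ _ hv₁sup)
    · intro w hw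
      rcases Submodule.mem_sup.mp hw with ⟨w₁, hw₁, w₂, hw₂, rfl⟩
      rcases Submodule.mem_span_singleton.mp hw₁ with ⟨s, rfl⟩
      have hvsplit : (inner ℝ (A - u) v : ℝ) = 0 := by
        have : v = v₁ + (orthogonalProjection P' v : EuclideanSpace ℝ (Fin n)) := by
          rw [hv₁def]; abel
        rw [this, inner_add_right, hAu1, h2 _ (orthogonalProjection P' v).2, add_zero]
      rw [inner_add_right, real_inner_smul_right, hvsplit, h2 _ hw₂]
      ring
  rw [key]
  have hPvle : ‖(orthogonalProjection P' v : EuclideanSpace ℝ (Fin n))‖ ≤ ‖v‖ := by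
    have h1 := (orthogonalProjection P').le_opNorm v
    have h2 := orthogonalProjection_norm_le P'
    calc ‖(orthogonalProjection P' v : EuclideanSpace ℝ (Fin n))‖
        ≤ ‖orthogonalProjection P'‖ * ‖v‖ := h1
      _ ≤ 1 * ‖v‖ := by gcongr
      _ = ‖v‖ := one_mul _
  have hsingle : ‖(orthogonalProjection (Submodule.span ℝ {v}) A : EuclideanSpace ℝ (Fin n))‖
      = |(inner ℝ v A : ℝ)| / ‖v‖ := by
    change ‖(Submodule.span ℝ {v}).starProjection A‖ = _
    rw [starProjection_singleton ℝ, norm_smul, Real.norm_eq_abs, abs_div]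
    simp only [RCLike.ofReal_real_eq_id, id]
    rw [abs_of_nonneg (by positivity : (0:ℝ) ≤ ‖v‖ ^ 2)]
    field_simp
  have hpv : |(inner ℝ ((orthogonalProjection P' v : EuclideanSpace ℝ (Fin n))) A : ℝ)|
      ≤ ‖v‖ * ‖(orthogonalProjection P' A : EuclideanSpace ℝ (Fin n))‖ := by
    have e4 : (inner ℝ ((orthogonalProjection P' v : EuclideanSpace ℝ (Fin n)))
        (A - (orthogonalProjection P' A : EuclideanSpace ℝ (Fin n))) : ℝ) = 0 :=
      (sub_starProjection_mem_orthogonal A) _ (orthogonalProjection P' v).2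
    have e5 : (inner ℝ ((orthogonalProjection P' v : EuclideanSpace ℝ (Fin n))) A : ℝ)
        = inner ℝ ((orthogonalProjection P' v : EuclideanSpace ℝ (Fin n)))
            ((orthogonalProjection P' A : EuclideanSpace ℝ (Fin n))) := by
      rw [inner_sub_right] at e4; linarith
    rw [e5]
    calc |(inner ℝ ((orthogonalProjection P' v : EuclideanSpace ℝ (Fin n)))
        ((orthogonalProjection P' A : EuclideanSpace ℝ (Fin n))) : ℝ)|
        ≤ ‖(orthogonalProjection P' v : EuclideanSpace ℝ (Fin n))‖ *
          ‖(orthogonalProjection P' A : EuclideanSpace ℝ (Fin n))‖ := abs_real_inner_le_norm _ _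
      _ ≤ ‖v‖ * ‖(orthogonalProjection P' A : EuclideanSpace ℝ (Fin n))‖ := by
          gcongr
  set a := ‖(orthogonalProjection P' A : EuclideanSpace ℝ (Fin n))‖ with ha
  set sP := ‖(orthogonalProjection (Submodule.span ℝ {v}) A : EuclideanSpace ℝ (Fin n))‖ with hsP
  have ha0 : 0 ≤ a := norm_nonneg _
  have hs0 : 0 ≤ sP := norm_nonneg _
  have hub : ‖u‖ ≤ a + |(inner ℝ v₁ A : ℝ)| / ‖v₁‖ := by
    rw [hu]
    refine le_trans (norm_add_le _ _) ?_
    have : ‖t • v₁‖ = |(inner ℝ v₁ A : ℝ)| / ‖v₁‖ := by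
      rw [norm_smul, Real.norm_eq_abs, ht, abs_div,
        abs_of_nonneg (by positivity : (0:ℝ) ≤ ‖v₁‖ ^ 2)]
      field_simp
    rw [this]
  have hsplit : |(inner ℝ v₁ A : ℝ)| ≤ ‖v‖ * sP + ‖v‖ * a := by
    have e6 : (inner ℝ v₁ A : ℝ) = (inner ℝ v A : ℝ)
        - (inner ℝ ((orthogonalProjection P' v : EuclideanSpace ℝ (Fin n))) A : ℝ) := by
      rw [hv₁def, inner_sub_left]
    rw [e6]
    have e7 : |(inner ℝ v A : ℝ)| = ‖v‖ * sP := by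
      rw [hsingle]; field_simp
    calc |(inner ℝ v A : ℝ) - (inner ℝ ((orthogonalProjection P' v : EuclideanSpace ℝ (Fin n))) A : ℝ)|
        ≤ |(inner ℝ v A : ℝ)| + |(inner ℝ ((orthogonalProjection P' v : EuclideanSpace ℝ (Fin n))) A : ℝ)| :=
          abs_sub _ _
      _ ≤ ‖v‖ * sP + ‖v‖ * a := by rw [e7]; gcongr
  have h5 : |(inner ℝ v₁ A : ℝ)| / ‖v₁‖ ≤ (sP + a) / c := by
    rw [div_le_div_iff₀ hv₁pos hc]
    nlinarith [mul_nonneg (add_nonneg hs0 ha0) (sub_nonneg.2 hv₁),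
      mul_nonneg hc.le (sub_nonneg.2 hsplit)]
  have hfin : a + (sP + a) / c = (1 + 1/c) * a + (1/c) * sP := by
    field_simp
    ring
  linarith [hub, h5]

lemma aux_ind (c : ℝ) (hc : 0 < c) (hc1 : c ≤ 1) :
    ∀ (k n : ℕ) (ν : Fin k → EuclideanSpace ℝ (Fin n)),
      (∀ i, ν i ≠ 0) →
      (∀ i : Fin k, (i : ℕ) + 1 < k →
        c * ‖ν i‖ ≤ ‖(orthogonalProjection
          ((Submodule.span ℝ {w | ∃ j : Fin k, i < j ∧ w = ν j})ᗮ) (ν i) :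
          EuclideanSpace ℝ (Fin n))‖) →
      LinearIndependent ℝ ν ∧
      ∀ A : EuclideanSpace ℝ (Fin n),
        ‖(orthogonalProjection (Submodule.span ℝ (Set.range ν)) A : EuclideanSpace ℝ (Fin n))‖ ≤
          (1 + 2/c) ^ k * ∑ i, ‖(orthogonalProjection (Submodule.span ℝ {ν i}) A :
            EuclideanSpace ℝ (Fin n))‖ := by
  intro k
  induction k with
  | zero =>
    intro n ν _ _
    refine ⟨linearIndependent_empty_type, fun A => ?_⟩
    rw [Set.range_eq_empty, Submodule.span_empty]
    simp
  | succ k IH =>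
    intro n ν hne hproj
    set ν' : Fin k → EuclideanSpace ℝ (Fin n) := fun i => ν i.succ with hν'
    have hne' : ∀ i, ν' i ≠ 0 := fun i => hne i.succ
    have hsetB : ∀ i : Fin k, {w | ∃ j : Fin k, i < j ∧ w = ν' j}
        = {w | ∃ j : Fin (k+1), i.succ < j ∧ w = ν j} := by
      intro i
      ext x
      constructor
      · rintro ⟨j, hij, rfl⟩
        exact ⟨j.succ, Fin.succ_lt_succ_iff.mpr hij, rfl⟩
      · rintro ⟨j, hij, rfl⟩
        cases j using Fin.cases with
        | zero => simp at hij
        | succ j' => exact ⟨j', Fin.succ_lt_succ_iff.mp hij, rfl⟩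
    have hproj' : ∀ i : Fin k, (i : ℕ) + 1 < k →
        c * ‖ν' i‖ ≤ ‖(orthogonalProjection
          ((Submodule.span ℝ {w | ∃ j : Fin k, i < j ∧ w = ν' j})ᗮ) (ν' i) :
          EuclideanSpace ℝ (Fin n))‖ := by
      intro i hik
      have h := hproj i.succ (by simp only [Fin.val_succ]; omega)
      rw [hsetB i]
      exact h
    obtain ⟨hLI', hbd'⟩ := IH n ν' hne' hproj'
    set P' := Submodule.span ℝ (Set.range ν') with hP'
    have hsetA : Set.range ν' = {w | ∃ j : Fin (k+1), (0 : Fin (k+1)) < j ∧ w = ν j} := by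
      ext x
      constructor
      · rintro ⟨j, rfl⟩
        exact ⟨j.succ, Fin.succ_pos j, rfl⟩
      · rintro ⟨j, hj, rfl⟩
        cases j using Fin.cases with
        | zero => simp at hj
        | succ j' => exact ⟨j', rfl⟩
    have h0 : c * ‖ν 0‖ ≤ ‖(orthogonalProjection P'ᗮ (ν 0) : EuclideanSpace ℝ (Fin n))‖ := by
      by_cases hk : 0 < k
      · have h := hproj 0 (by simpa using hk)
        rw [hP', hsetA]
        exact h
      · have hk0 : k = 0 := by omega
        subst hk0
        have hre : Set.range ν' = (∅ : Set (EuclideanSpace ℝ (Fin n))) := Set.range_eq_empty _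
        have hmem : ν 0 ∈ P'ᗮ := by
          rw [hP', hre, Submodule.span_empty, Submodule.bot_orthogonal_eq_top]
          exact Submodule.mem_top
        rw [show ((orthogonalProjection P'ᗮ (ν 0)) : EuclideanSpace ℝ (Fin n)) = ν 0 from
          starProjection_eq_self_iff.mpr hmem]
        have : 0 < ‖ν 0‖ := norm_pos_iff.mpr (hne 0)
        nlinarith
    have hν0notmem : ν 0 ∉ P' := by
      intro hmem
      have h1 : orthogonalProjection P'ᗮ (ν 0) = 0 :=
        Submodule.orthogonalProjectionOnto_eq_zero_iff.mpr (Submodule.le_orthogonal_orthogonal P' hmem)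
      rw [h1] at h0
      simp only [ZeroMemClass.coe_zero, norm_zero] at h0
      have : 0 < ‖ν 0‖ := norm_pos_iff.mpr (hne 0)
      nlinarith
    have hLI : LinearIndependent ℝ ν := by
      have h2 : LinearIndependent ℝ (Fin.cons (ν 0) ν' : Fin (k+1) → EuclideanSpace ℝ (Fin n)) :=
        hLI'.fin_cons hν0notmem
      rwa [show (Fin.cons (ν 0) ν' : Fin (k+1) → EuclideanSpace ℝ (Fin n)) = ν from
        funext fun i => Fin.cases rfl (fun _ => rfl) i] at h2
    refine ⟨hLI, fun A => ?_⟩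
    have hspan : Submodule.span ℝ (Set.range ν) = Submodule.span ℝ {ν 0} ⊔ P' := by
      rw [hP', show Set.range ν = insert (ν 0) (Set.range ν') from Fin.range_fin_succ ν,
        Submodule.span_insert]
    have hstep := step_ineq c hc (ν 0) P' h0 (hne 0) A
    rw [hspan, Fin.sum_univ_succ]
    have hbA := hbd' A
    set Q : ℝ := (1 + 2/c) ^ k with hQ
    set S : ℝ := ∑ i : Fin k, ‖(orthogonalProjection (Submodule.span ℝ {ν i.succ}) A :
      EuclideanSpace ℝ (Fin n))‖ with hS
    set s0 : ℝ := ‖(orthogonalProjection (Submodule.span ℝ {ν 0}) A :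
      EuclideanSpace ℝ (Fin n))‖ with hs0def
    have hi : (0:ℝ) < 1/c := by positivity
    have hpow : (1:ℝ) ≤ Q := one_le_pow₀ (le_add_of_nonneg_right (by positivity))
    have hQnn : (0:ℝ) ≤ Q := by linarith
    have hS0 : 0 ≤ S := Finset.sum_nonneg fun i _ => norm_nonneg _
    have hs0 : 0 ≤ s0 := norm_nonneg _
    have ha0 : 0 ≤ ‖(orthogonalProjection P' A : EuclideanSpace ℝ (Fin n))‖ := norm_nonneg _
    have hgoal : (1 + 2/c) ^ (k+1) * (s0 + S) = Q * (1 + 2*(1/c)) * (s0 + S) := by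
      rw [pow_succ, hQ]; ring
    rw [hgoal]
    nlinarith [hstep, hbA, hi, hpow, hS0, hs0, ha0,
      mul_nonneg (by positivity : (0:ℝ) ≤ 1 + 1/c) (sub_nonneg.2 hbA),
      mul_nonneg (mul_nonneg hi.le hQnn) hS0,
      mul_nonneg hs0 (sub_nonneg.2 hpow),
      mul_nonneg (mul_nonneg hi.le hs0) (sub_nonneg.2 hpow),
      mul_nonneg hi.le hs0]

/-- If `ν 1, …, ν k ∈ Π` are nonzero vectors such that each line `span{ν i}`
makes angle at most `ζ` with the orthogonal complement of `span{ν (i+1), …, ν k}`,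
then `|p_Π(A)| ≤ C·Σ_i |p_{span{ν i}}(A)|` with `C` depending only on `k` and `ζ`. -/
theorem proj_le_sum_proj (k : ℕ) (ζ : ℝ) (hζ : 0 < ζ ∧ ζ < Real.pi / 2) :
    ∃ C > 0, ∀ (n : ℕ) (Pl : Submodule ℝ (EuclideanSpace ℝ (Fin n)))
      (ν : Fin k → EuclideanSpace ℝ (Fin n)),
      Module.finrank ℝ Pl = k →
      (∀ i, ν i ∈ Pl) → (∀ i, ν i ≠ 0) →
      (∀ i : Fin k, (i : ℕ) < k - 1 →
        lineSubspaceAngle (ν i)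
          ((Submodule.span ℝ {w | ∃ j : Fin k, i < j ∧ w = ν j})ᗮ) ≤ ζ) →
      ∀ A : EuclideanSpace ℝ (Fin n),
        ‖(Submodule.orthogonalProjectionOnto Pl A : EuclideanSpace ℝ (Fin n))‖ ≤
          C * ∑ i : Fin k,
            ‖(Submodule.orthogonalProjectionOnto (Submodule.span ℝ {ν i}) A :
              EuclideanSpace ℝ (Fin n))‖ := by
  classical
  obtain ⟨hζ0, hζπ⟩ := hζ
  have hπ := Real.pi_pos
  set ζ' : ℝ := (ζ + Real.pi / 2) / 2 with hζ'def
  have hζ'pos : 0 < ζ' := by rw [hζ'def]; linarith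
  have hζ'lt : ζ' < Real.pi / 2 := by rw [hζ'def]; linarith
  have hζζ' : ζ < ζ' := by rw [hζ'def]; linarith
  have hζ'pi : ζ' ≤ Real.pi := by linarith
  set c : ℝ := Real.cos ζ' with hcdef
  have hc : 0 < c := Real.cos_pos_of_mem_Ioo ⟨by linarith, hζ'lt⟩
  have hc1 : c ≤ 1 := Real.cos_le_one ζ'
  refine ⟨(1 + 2/c) ^ k, by positivity, ?_⟩
  intro n Pl ν hrank hmem hne hang A
  have hproj : ∀ i : Fin k, (i : ℕ) + 1 < k →
      c * ‖ν i‖ ≤ ‖(orthogonalProjection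
        ((Submodule.span ℝ {w | ∃ j : Fin k, i < j ∧ w = ν j})ᗮ) (ν i) :
        EuclideanSpace ℝ (Fin n))‖ := by
    intro i hik
    set W : Submodule ℝ (EuclideanSpace ℝ (Fin n)) :=
      Submodule.span ℝ {w | ∃ j : Fin k, i < j ∧ w = ν j} with hWdef
    -- Wᗮ ≠ ⊥
    have hWne : Wᗮ ≠ ⊥ := by
      intro hbot
      have hWtop : W = ⊤ := Submodule.orthogonal_eq_bot_iff.mp hbot
      have hWPl : W ≤ Pl := by
        rw [hWdef]
        refine Submodule.span_le.2 ?_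
        rintro x ⟨j, _, rfl⟩
        exact hmem j
      have hPltop : Pl = ⊤ := top_le_iff.mp (hWtop ▸ hWPl)
      have hnk : n = k := by
        rw [← hrank, hPltop, finrank_top, finrank_euclideanSpace_fin]
      -- finrank W ≤ k - 1
      have hWsub : {w | ∃ j : Fin k, i < j ∧ w = ν j}
          ⊆ ↑(Finset.image ν (Finset.univ.erase i)) := by
        rintro x ⟨j, hij, rfl⟩
        simp only [Finset.coe_image, Set.mem_image, Finset.mem_coe, Finset.mem_erase]
        exact ⟨j, ⟨hij.ne', Finset.mem_univ j⟩, rfl⟩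
      have hWle : W ≤ Submodule.span ℝ ↑(Finset.image ν (Finset.univ.erase i)) :=
        Submodule.span_le.2 (hWsub.trans Submodule.subset_span)
      have hfr1 : Module.finrank ℝ W ≤ (Finset.image ν (Finset.univ.erase i)).card :=
        le_trans (Submodule.finrank_mono hWle) (finrank_span_finset_le_card _)
      have hcard : (Finset.image ν (Finset.univ.erase i)).card ≤ k - 1 := by
        refine le_trans Finset.card_image_le ?_
        rw [Finset.card_erase_of_mem (Finset.mem_univ i), Finset.card_univ, Fintype.card_fin]
      have hfrW : Module.finrank ℝ W = n := by rw [hWtop, finrank_top, finrank_euclideanSpace_fin]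
      have hik' := i.isLt
      omega
    obtain ⟨w₀, hw₀mem, hw₀ne⟩ := (Submodule.ne_bot_iff _).mp hWne
    set S : Set ℝ := {θ : ℝ | ∃ w ∈ Wᗮ, w ≠ 0 ∧ θ = InnerProductGeometry.angle (ν i) w}
      with hSdef
    have hSne : S.Nonempty := ⟨InnerProductGeometry.angle (ν i) w₀, w₀, hw₀mem, hw₀ne, rfl⟩
    have hbdd : BddBelow S := by
      refine ⟨0, ?_⟩
      rintro θ ⟨w, _, _, rfl⟩
      exact InnerProductGeometry.angle_nonneg _ _
    have hlt : sInf S < ζ' := lt_of_le_of_lt (hang i (by omega)) hζζ'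
    obtain ⟨θ, hθS, hθ⟩ := (csInf_lt_iff hbdd hSne).mp hlt
    obtain ⟨w, hwmem, hwne, rfl⟩ := hθS
    have hwpos : 0 < ‖w‖ := norm_pos_iff.mpr hwne
    have hcos : c ≤ Real.cos (InnerProductGeometry.angle (ν i) w) :=
      Real.cos_le_cos_of_nonneg_of_le_pi (InnerProductGeometry.angle_nonneg _ _) hζ'pi hθ.le
    have hinner : Real.cos (InnerProductGeometry.angle (ν i) w) * (‖ν i‖ * ‖w‖)
        = (inner ℝ (ν i) w : ℝ) := InnerProductGeometry.cos_angle_mul_norm_mul_norm _ _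
    have hd := sub_starProjection_mem_orthogonal (K := Wᗮ) (ν i)
    have h3 : (inner ℝ w ((ν i) - (orthogonalProjection Wᗮ (ν i) : EuclideanSpace ℝ (Fin n))) : ℝ)
        = 0 := hd w hwmem
    rw [inner_sub_right] at h3
    have hcomm1 : (inner ℝ (ν i) w : ℝ) = inner ℝ w (ν i) := real_inner_comm _ _
    have hcomm2 : (inner ℝ ((orthogonalProjection Wᗮ (ν i) : EuclideanSpace ℝ (Fin n))) w : ℝ)
        = inner ℝ w ((orthogonalProjection Wᗮ (ν i) : EuclideanSpace ℝ (Fin n))) :=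
      real_inner_comm _ _
    have hCS : (inner ℝ ((orthogonalProjection Wᗮ (ν i) : EuclideanSpace ℝ (Fin n))) w : ℝ)
        ≤ ‖(orthogonalProjection Wᗮ (ν i) : EuclideanSpace ℝ (Fin n))‖ * ‖w‖ :=
      real_inner_le_norm _ _
    have hchain : (c * ‖ν i‖) * ‖w‖
        ≤ ‖(orthogonalProjection Wᗮ (ν i) : EuclideanSpace ℝ (Fin n))‖ * ‖w‖ := by
      nlinarith [mul_nonneg (mul_nonneg (sub_nonneg.2 hcos) (norm_nonneg (ν i))) (norm_nonneg w)]
    exact le_of_mul_le_mul_right hchain hwpos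
  obtain ⟨hLI, hbd⟩ := aux_ind c hc hc1 k n ν hne hproj
  have hle : Submodule.span ℝ (Set.range ν) ≤ Pl :=
    Submodule.span_le.2 (Set.range_subset_iff.2 hmem)
  have hfr : Module.finrank ℝ (Submodule.span ℝ (Set.range ν)) = k := by
    rw [finrank_span_eq_card hLI, Fintype.card_fin]
  have hPl : Submodule.span ℝ (Set.range ν) = Pl :=
    Submodule.eq_of_le_of_finrank_le hle (by rw [hfr, hrank])
  rw [← hPl]
  exact hbd A
end

section
/- Let D ⊂ ℝ^n be a bounded convex set with nonempty interior containing the origin. Then there exist ε_0 > 0 and ξ̄ ∈ (0, π/2), depending only on D, such that for every linear subspace Π ⊂ ℝ^n of positive dimension and every x ∈ ∂D with angle between the line through 0 and x and Π at most ε_0, every external normal ν_x to D at x satisfies angle(ν_x, Π) < ξ̄. -/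
open InnerProductGeometry RealInnerProductSpace

private lemma my_arccos_anti {a b : ℝ} (h : a ≤ b) : Real.arccos b ≤ Real.arccos a := by
  unfold Real.arccos
  have := Real.monotone_arcsin h
  linarith

private lemma angle_triangle_unit {V : Type*} [NormedAddCommGroup V] [InnerProductSpace ℝ V]
    (x y z : V) (hx : ‖x‖ = 1) (hy : ‖y‖ = 1) (hz : ‖z‖ = 1) :
    angle x z ≤ angle x y + angle y z := by
  set a := angle x y with ha
  set b := angle y z with hb
  have hxy1 : |(⟪x, y⟫)| ≤ 1 := by
    simpa [hx, hy] using abs_real_inner_le_norm x y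
  have hyz1 : |(⟪y, z⟫)| ≤ 1 := by
    simpa [hy, hz] using abs_real_inner_le_norm y z
  have hxz1 : |(⟪x, z⟫)| ≤ 1 := by
    simpa [hx, hz] using abs_real_inner_le_norm x z
  have hxy : ⟪x, y⟫ = Real.cos a := by
    rw [ha, angle, hx, hy]
    rw [mul_one, div_one, Real.cos_arccos (abs_le.mp hxy1).1 (abs_le.mp hxy1).2]
  have hyz : ⟪y, z⟫ = Real.cos b := by
    rw [hb, angle, hy, hz]
    rw [mul_one, div_one, Real.cos_arccos (abs_le.mp hyz1).1 (abs_le.mp hyz1).2]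
  have ha0 : 0 ≤ a := angle_nonneg x y
  have haπ : a ≤ Real.pi := angle_le_pi x y
  have hb0 : 0 ≤ b := angle_nonneg y z
  have hbπ : b ≤ Real.pi := angle_le_pi y z
  set u := x - Real.cos a • y with hu
  set v := z - Real.cos b • y with hv
  have hyy : ⟪y, y⟫ = 1 := by
    rw [real_inner_self_eq_norm_sq, hy]; norm_num
  have huv : ⟪u, v⟫ = ⟪x, z⟫ - Real.cos a * Real.cos b := by
    rw [hu, hv]
    rw [inner_sub_left, inner_sub_right, inner_sub_right, real_inner_smul_left,
      real_inner_smul_left, real_inner_smul_right, real_inner_smul_right, hyy,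
      hxy, hyz]
    ring
  have hnu : ‖u‖ = Real.sin a := by
    have h2 : ‖u‖ ^ 2 = Real.sin a ^ 2 := by
      rw [hu, norm_sub_sq_real, real_inner_smul_right, hxy, norm_smul, hy, hx,
        Real.sin_sq]
      simp [abs_mul_abs_self]
      ring
    have := Real.sin_nonneg_of_nonneg_of_le_pi ha0 haπ
    nlinarith [norm_nonneg u]
  have hnv : ‖v‖ = Real.sin b := by
    have h2 : ‖v‖ ^ 2 = Real.sin b ^ 2 := by
      rw [hv, norm_sub_sq_real, real_inner_smul_right, real_inner_comm y z, hyz,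
        norm_smul, hy, hz, Real.sin_sq]
      simp [abs_mul_abs_self]
      ring
    have := Real.sin_nonneg_of_nonneg_of_le_pi hb0 hbπ
    nlinarith [norm_nonneg v]
  have hcs : |(⟪u, v⟫)| ≤ Real.sin a * Real.sin b := by
    rw [← hnu, ← hnv]; exact abs_real_inner_le_norm u v
  have key : Real.cos (a + b) ≤ ⟪x, z⟫ := by
    rw [Real.cos_add]
    have := (abs_le.mp hcs).1
    linarith [huv ▸ this]
  by_cases hab : a + b ≤ Real.pi
  · have : angle x z = Real.arccos ⟪x, z⟫ := by
      rw [angle, hx, hz, mul_one, div_one]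
    rw [this]
    calc Real.arccos ⟪x, z⟫ ≤ Real.arccos (Real.cos (a + b)) := my_arccos_anti key
      _ = a + b := Real.arccos_cos (by linarith) hab
  · linarith [angle_le_pi x z]

private lemma angle_triangle' {V : Type*} [NormedAddCommGroup V] [InnerProductSpace ℝ V]
    (x y z : V) (hx : x ≠ 0) (hy : y ≠ 0) (hz : z ≠ 0) :
    angle x z ≤ angle x y + angle y z := by
  have hx' : (0:ℝ) < ‖x‖⁻¹ := inv_pos.mpr (norm_pos_iff.mpr hx)
  have hy' : (0:ℝ) < ‖y‖⁻¹ := inv_pos.mpr (norm_pos_iff.mpr hy)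
  have hz' : (0:ℝ) < ‖z‖⁻¹ := inv_pos.mpr (norm_pos_iff.mpr hz)
  have e1 : angle x z = angle (‖x‖⁻¹ • x) (‖z‖⁻¹ • z) := by
    rw [angle_smul_left_of_pos _ _ hx', angle_smul_right_of_pos _ _ hz']
  have e2 : angle x y = angle (‖x‖⁻¹ • x) (‖y‖⁻¹ • y) := by
    rw [angle_smul_left_of_pos _ _ hx', angle_smul_right_of_pos _ _ hy']
  have e3 : angle y z = angle (‖y‖⁻¹ • y) (‖z‖⁻¹ • z) := by
    rw [angle_smul_left_of_pos _ _ hy', angle_smul_right_of_pos _ _ hz']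
  rw [e1, e2, e3]
  exact angle_triangle_unit _ _ _ (norm_smul_inv_norm hx) (norm_smul_inv_norm hy)
    (norm_smul_inv_norm hz)

/-- For a bounded convex set `D` with `0` in its interior there are `ε₀ > 0` and
`ξ̄ ∈ (0, π/2)` such that for any linear subspace `Π` of positive dimension and
any `x ∈ ∂D` whose direction makes angle at most `ε₀` with `Π`, every external
normal to `D` at `x` makes angle `< ξ̄` with `Π`. -/
theorem external_normal_angle_bound {n : ℕ}
    (D : Set (EuclideanSpace ℝ (Fin n))) (hD : Convex ℝ D)
    (hDb : Bornology.IsBounded D) (h0 : (0 : EuclideanSpace ℝ (Fin n)) ∈ interior D) :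
    ∃ ε₀ > 0, ∃ ξ : ℝ, 0 < ξ ∧ ξ < Real.pi / 2 ∧
      ∀ Pl : Submodule ℝ (EuclideanSpace ℝ (Fin n)), Pl ≠ ⊥ →
        ∀ x ∈ frontier D, lineSubspaceAngle x Pl ≤ ε₀ →
          ∀ νx : EuclideanSpace ℝ (Fin n), νx ≠ 0 →
            (∀ y ∈ D, inner ℝ (y - x) νx ≤ (0 : ℝ)) →
            lineSubspaceAngle νx Pl < ξ := by
  obtain ⟨r, hr, hball⟩ := Metric.isOpen_iff.mp isOpen_interior 0 h0
  obtain ⟨R₀, hR₀⟩ := hDb.subset_closedBall 0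
  set R : ℝ := max R₀ r with hRdef
  have hRr : r ≤ R := le_max_right _ _
  have hRpos : 0 < R := lt_of_lt_of_le hr hRr
  have hDR : D ⊆ Metric.closedBall 0 R :=
    hR₀.trans (Metric.closedBall_subset_closedBall (le_max_left _ _))
  set c : ℝ := r / (2 * R) with hc
  have hcpos : 0 < c := by positivity
  set α : ℝ := Real.arccos c with hα
  have hα2 : α < Real.pi / 2 := Real.arccos_lt_pi_div_two.mpr hcpos
  have hα0 : 0 ≤ α := Real.arccos_nonneg c
  refine ⟨(Real.pi / 2 - α) / 4, by linarith, α + (Real.pi / 2 - α) / 2, by linarith,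
    by linarith, ?_⟩
  intro Pl hPl x hx hxa ν hν hnormal
  -- x is in the closed ball of radius R and outside the ball of radius r
  have hxcl : x ∈ Metric.closedBall (0 : EuclideanSpace ℝ (Fin n)) R := by
    have : x ∈ closure D := hx.1
    exact closure_minimal hDR Metric.isClosed_closedBall this
  have hxR : ‖x‖ ≤ R := by simpa using Metric.mem_closedBall.mp hxcl
  have hxr : r ≤ ‖x‖ := by
    by_contra h
    push_neg at h
    exact hx.2 (hball (by simpa using h))
  have hxne : x ≠ 0 := by
    intro h; rw [h] at hxr; simp at hxr; linarith
  have hxpos : 0 < ‖x‖ := lt_of_lt_of_le hr hxr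
  have hνpos : 0 < ‖ν‖ := norm_pos_iff.mpr hν
  -- inner x ν ≥ (r/2) ‖ν‖
  have hinner : (r / 2) * ‖ν‖ ≤ ⟪x, ν⟫ := by
    set y : EuclideanSpace ℝ (Fin n) := (r / (2 * ‖ν‖)) • ν with hy
    have hν0 : ‖ν‖ ≠ 0 := ne_of_gt hνpos
    have hyn : ‖y‖ = r / 2 := by
      rw [hy, norm_smul, Real.norm_eq_abs, abs_of_pos (by positivity)]
      field_simp
    have hyD : y ∈ D := by
      apply interior_subset
      apply hball
      simp only [Metric.mem_ball, dist_zero_right, hyn]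
      linarith
    have := hnormal y hyD
    rw [inner_sub_left] at this
    have hyν : ⟪y, ν⟫ = (r / 2) * ‖ν‖ := by
      rw [hy, real_inner_smul_left, real_inner_self_eq_norm_sq]
      field_simp
    linarith [hyν ▸ this]
  -- angle x ν ≤ α
  have hangle : angle x ν ≤ α := by
    rw [angle, hα]
    apply my_arccos_anti
    rw [hc, div_le_div_iff₀ (by positivity) (by positivity)]
    nlinarith [mul_le_mul_of_nonneg_right hxR (le_of_lt hνpos),
      mul_le_mul_of_nonneg_right hinner (le_of_lt hRpos)]
  -- now use the triangle inequality
  have hbdd : ∀ (v : EuclideanSpace ℝ (Fin n)),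
      BddBelow {θ : ℝ | ∃ w ∈ Pl, w ≠ 0 ∧ θ = angle v w} := by
    intro v
    refine ⟨0, fun θ hθ => ?_⟩
    obtain ⟨w, _, _, rfl⟩ := hθ
    exact angle_nonneg v w
  obtain ⟨w₀, hw₀Pl, hw₀⟩ := Pl.ne_bot_iff.mp hPl
  have hne : ∀ (v : EuclideanSpace ℝ (Fin n)),
      {θ : ℝ | ∃ w ∈ Pl, w ≠ 0 ∧ θ = angle v w}.Nonempty :=
    fun v => ⟨angle v w₀, w₀, hw₀Pl, hw₀, rfl⟩
  have hmain : lineSubspaceAngle ν Pl ≤ α + (Real.pi / 2 - α) / 4 := by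
    apply le_of_forall_pos_le_add
    intro δ hδ
    have hlt : lineSubspaceAngle x Pl < (Real.pi / 2 - α) / 4 + δ := by
      calc lineSubspaceAngle x Pl ≤ (Real.pi / 2 - α) / 4 := hxa
        _ < _ := by linarith
    obtain ⟨θ, hθmem, hθlt⟩ := exists_lt_of_csInf_lt (hne x) hlt
    obtain ⟨w, hwPl, hwne, rfl⟩ := hθmem
    have htri : angle ν w ≤ angle ν x + angle x w := angle_triangle' ν x w hν hxne hwne
    have hle : lineSubspaceAngle ν Pl ≤ angle ν w :=
      csInf_le (hbdd ν) ⟨w, hwPl, hwne, rfl⟩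
    have : angle ν x ≤ α := by rwa [angle_comm]
    linarith
  linarith
end

section
/- Let ‖·‖ be a norm on ℝ^n. There exists a constant ε̄ > 0, depending only on ‖·‖, such that for all distinct points A, B ∈ ℝ^n and every C in the mediatrix M(A,B) = {z : ‖A - z‖ = ‖B - z‖} with the (Euclidean) angle ∠ABC ≤ 2ε̄, one has |B - C| ≤ (3/4)·|A - B|, where |·| is the Euclidean norm. -/
open scoped RealInnerProductSpace

/-- There is `ε̄ > 0` depending only on the norm `N` such that for any distinct
`A, B` and any `C` in the mediatrix of `{A, B}` with Euclidean angle
`∠ABC ≤ 2ε̄`, one has `|B - C| ≤ (3/4)·|A - B|`. -/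
theorem mediatrix_small_angle {n : ℕ}
    (N : EuclideanSpace ℝ (Fin n) → ℝ)
    (hN0 : ∀ x, N x = 0 ↔ x = 0)
    (hNsmul : ∀ (c : ℝ) x, N (c • x) = |c| * N x)
    (hNadd : ∀ x y, N (x + y) ≤ N x + N y) :
    ∃ ε > 0, ∀ A B C : EuclideanSpace ℝ (Fin n), A ≠ B →
      N (A - C) = N (B - C) →
      EuclideanGeometry.angle A B C ≤ 2 * ε →
      ‖B - C‖ ≤ 3 / 4 * ‖A - B‖ := by
  classical
  have hN0' : N 0 = 0 := (hN0 0).mpr rfl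
  have hNneg : ∀ x, N (-x) = N x := by
    intro x; simpa using hNsmul (-1) x
  have hNnonneg : ∀ x, 0 ≤ N x := by
    intro x
    have h := hNadd x (-x)
    rw [add_neg_cancel, hN0', hNneg] at h
    linarith
  -- upper bound constant
  set M : ℝ := (∑ i, N (EuclideanSpace.single i (1 : ℝ))) + 1 with hMdef
  have hsum_nonneg : 0 ≤ ∑ i, N (EuclideanSpace.single i (1 : ℝ)) :=
    Finset.sum_nonneg fun i _ => hNnonneg _
  have hM0 : 0 < M := by rw [hMdef]; linarith
  have hNsum : ∀ (s : Finset (Fin n)) (f : Fin n → EuclideanSpace ℝ (Fin n)),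
      N (∑ i ∈ s, f i) ≤ ∑ i ∈ s, N (f i) := by
    intro s f
    induction s using Finset.induction_on with
    | empty => simp [hN0']
    | insert _ _ h ih =>
      rw [Finset.sum_insert h, Finset.sum_insert h]
      exact (hNadd _ _).trans (by linarith)
  have habs : ∀ (x : EuclideanSpace ℝ (Fin n)) (i : Fin n), |x i| ≤ ‖x‖ := by
    intro x i
    have h := abs_real_inner_le_norm (EuclideanSpace.single i (1 : ℝ)) x
    simpa [EuclideanSpace.inner_single_left, EuclideanSpace.norm_single] using h
  have hM : ∀ x, N x ≤ M * ‖x‖ := by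
    intro x
    have hx : ∑ i, x i • (EuclideanSpace.single i (1 : ℝ)) = x := by
      have h := (EuclideanSpace.basisFun (Fin n) ℝ).toBasis.sum_repr x
      simpa [EuclideanSpace.basisFun_apply, EuclideanSpace.basisFun_repr] using h
    calc N x = N (∑ i, x i • (EuclideanSpace.single i (1 : ℝ))) := by rw [hx]
      _ ≤ ∑ i, N (x i • (EuclideanSpace.single i (1 : ℝ))) := hNsum _ _
      _ = ∑ i, |x i| * N (EuclideanSpace.single i (1 : ℝ)) := by
          simp [hNsmul]
      _ ≤ ∑ i, ‖x‖ * N (EuclideanSpace.single i (1 : ℝ)) :=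
          Finset.sum_le_sum fun i _ =>
            mul_le_mul_of_nonneg_right (habs x i) (hNnonneg _)
      _ = (∑ i, N (EuclideanSpace.single i (1 : ℝ))) * ‖x‖ := by
          rw [← Finset.mul_sum, mul_comm]
      _ ≤ M * ‖x‖ := by
          have := norm_nonneg x
          nlinarith
  -- continuity of N
  have hNcont : Continuous N := by
    have hlip : LipschitzWith (Real.toNNReal M) N := by
      apply LipschitzWith.of_dist_le_mul
      intro x y
      rw [Real.dist_eq, dist_eq_norm, Real.coe_toNNReal _ hM0.le]
      have h1 : N x ≤ N (x - y) + N y := by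
        have := hNadd (x - y) y; simpa using this
      have h2 : N y ≤ N (y - x) + N x := by
        have := hNadd (y - x) x; simpa using this
      have h3 : N (y - x) = N (x - y) := by
        rw [← hNneg (x - y)]; rw [neg_sub]
      have h4 : N (x - y) ≤ M * ‖x - y‖ := hM _
      rw [abs_le]; constructor <;> linarith
    exact hlip.continuous
  -- lower bound constant
  obtain ⟨m, hm0, hm⟩ : ∃ m > 0, ∀ x, m * ‖x‖ ≤ N x := by
    rcases Nat.eq_zero_or_pos n with hn | hn
    · refine ⟨1, one_pos, fun x => ?_⟩
      subst hn
      have hx : x = 0 := PiLp.ext fun i => Fin.elim0 i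
      simp [hx, hN0']
    · have hne : (Metric.sphere (0 : EuclideanSpace ℝ (Fin n)) 1).Nonempty := by
        refine ⟨EuclideanSpace.single ⟨0, hn⟩ (1 : ℝ), ?_⟩
        simp [EuclideanSpace.norm_single]
      obtain ⟨x₀, hx₀S, hx₀min⟩ :=
        (isCompact_sphere (0 : EuclideanSpace ℝ (Fin n)) 1).exists_isMinOn hne
          hNcont.continuousOn
      have hx₀norm : ‖x₀‖ = 1 := by simpa using hx₀S
      have hx₀ : x₀ ≠ 0 := by
        intro h; rw [h] at hx₀norm; simp at hx₀norm
      have hm0 : 0 < N x₀ :=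
        (hNnonneg x₀).lt_of_ne' (fun h => hx₀ ((hN0 x₀).mp h))
      refine ⟨N x₀, hm0, fun x => ?_⟩
      rcases eq_or_ne x 0 with rfl | hx
      · simp [hN0']
      · have hxn : 0 < ‖x‖ := norm_pos_iff.mpr hx
        have hmem : ‖x‖⁻¹ • x ∈ Metric.sphere (0 : EuclideanSpace ℝ (Fin n)) 1 := by
          simp [norm_smul, abs_of_pos (inv_pos.mpr hxn), inv_mul_cancel₀ hxn.ne']
        have h1 : N x₀ ≤ N (‖x‖⁻¹ • x) := hx₀min hmem
        have h2 : N (‖x‖⁻¹ • x) = ‖x‖⁻¹ * N x := by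
          rw [hNsmul, abs_of_pos (inv_pos.mpr hxn)]
        rw [h2] at h1
        have := (mul_le_mul_of_nonneg_right h1 hxn.le)
        calc N x₀ * ‖x‖ ≤ ‖x‖⁻¹ * N x * ‖x‖ := this
          _ = N x := by field_simp
  -- the constant
  refine ⟨m / (8 * M), by positivity, ?_⟩
  intro A B C hAB hmed hangle
  rcases eq_or_ne C B with rfl | hCB
  · have : ‖C - C‖ = 0 := by simp
    rw [this]
    have : 0 < ‖A - C‖ := by
      rw [norm_pos_iff, sub_ne_zero]; exact hAB
    positivity
  set u : EuclideanSpace ℝ (Fin n) := A - B with hu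
  set v : EuclideanSpace ℝ (Fin n) := C - B with hv
  have hd : 0 < ‖u‖ := by rw [norm_pos_iff, hu, sub_ne_zero]; exact hAB
  have hr : 0 < ‖v‖ := by rw [norm_pos_iff, hv, sub_ne_zero]; exact hCB
  set d : ℝ := ‖u‖ with hdd
  set r : ℝ := ‖v‖ with hrr
  -- goal reduction
  have hBC : B - C = -v := by rw [hv]; abel
  have hAC : A - C = u - v := by rw [hu, hv]; abel
  rw [hBC, norm_neg, ← hrr]
  -- the mediatrix condition in terms of u, v
  have hmed' : N (v - u) = N v := by
    rw [hAC, hBC] at hmed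
    rw [← hNneg (v - u), neg_sub, hmed, hNneg]
  -- angle
  set θ : ℝ := EuclideanGeometry.angle A B C with hθ
  have hθ0 : 0 ≤ θ := InnerProductGeometry.angle_nonneg _ _
  have hcos : Real.cos θ = ⟪u, v⟫ / (d * r) := by
    have h1 : θ = InnerProductGeometry.angle u v := by
      rw [hθ, EuclideanGeometry.angle, hu, hv, vsub_eq_sub, vsub_eq_sub]
    rw [h1, InnerProductGeometry.cos_angle, ← hdd, ← hrr]
  -- unit vectors
  set uh : EuclideanSpace ℝ (Fin n) := d⁻¹ • u with huh
  set wh : EuclideanSpace ℝ (Fin n) := r⁻¹ • v with hwh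
  have huh1 : ‖uh‖ = 1 := by
    rw [huh, norm_smul, Real.norm_eq_abs, abs_of_pos (inv_pos.mpr hd), ← hdd,
      inv_mul_cancel₀ hd.ne']
  have hwh1 : ‖wh‖ = 1 := by
    rw [hwh, norm_smul, Real.norm_eq_abs, abs_of_pos (inv_pos.mpr hr), ← hrr,
      inv_mul_cancel₀ hr.ne']
  have hinner : ⟪wh, uh⟫ = Real.cos θ := by
    have h1 : ⟪wh, uh⟫ = r⁻¹ * (d⁻¹ * ⟪v, u⟫) := by
      rw [hwh, huh, real_inner_smul_left, real_inner_smul_right]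
    rw [h1, real_inner_comm, hcos, div_eq_mul_inv, mul_inv]
    ring
  have hsq : ‖wh - uh‖ ^ 2 = 2 - 2 * Real.cos θ := by
    rw [norm_sub_sq_real, hinner, huh1, hwh1]; ring
  have hcosb : 1 - θ ^ 2 / 2 ≤ Real.cos θ := by
    rcases eq_or_ne θ 0 with h | h
    · simp [h]
    · exact (Real.one_sub_sq_div_two_lt_cos h).le
  have hδθ : ‖wh - uh‖ ≤ θ := by
    have h1 : ‖wh - uh‖ ^ 2 ≤ θ ^ 2 := by rw [hsq]; linarith
    nlinarith [norm_nonneg (wh - uh)]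
  have hδ : ‖wh - uh‖ ≤ 2 * (m / (8 * M)) := hδθ.trans hangle
  -- decomposition
  have hvwh : v = r • wh := by
    rw [hwh, smul_smul, mul_inv_cancel₀ hr.ne', one_smul]
  have huuh : u = d • uh := by
    rw [huh, smul_smul, mul_inv_cancel₀ hd.ne', one_smul]
  set e : EuclideanSpace ℝ (Fin n) := v - r • uh with he
  have hebound : N e ≤ r * m / 4 := by
    have h1 : ‖e‖ = r * ‖wh - uh‖ := by
      rw [he]
      nth_rewrite 1 [hvwh]
      rw [← smul_sub, norm_smul, Real.norm_eq_abs, abs_of_pos hr]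
    have h2 : N e ≤ M * ‖e‖ := hM e
    have h3 : ‖e‖ ≤ r * (2 * (m / (8 * M))) := by
      rw [h1]
      exact mul_le_mul_of_nonneg_left hδ hr.le
    have h4 : M * (r * (2 * (m / (8 * M)))) = r * m / 4 := by
      field_simp; ring
    calc N e ≤ M * ‖e‖ := h2
      _ ≤ M * (r * (2 * (m / (8 * M)))) := mul_le_mul_of_nonneg_left h3 hM0.le
      _ = r * m / 4 := h4
  set a : ℝ := N uh with ha
  have hma : m ≤ a := by
    have := hm uh
    rwa [huh1, mul_one] at this
  have hNe0 : 0 ≤ N e := hNnonneg e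
  -- lower bound for N v
  have hNvlow : r * a - N e ≤ N v := by
    have h1 : N (r • uh) ≤ N v + N e := by
      have h2 : r • uh = v + (- e) := by rw [he]; abel
      rw [h2]
      exact (hNadd v (-e)).trans (by rw [hNneg])
    rw [hNsmul, abs_of_pos hr, ← ha] at h1
    linarith
  -- main case split
  by_contra hcon
  push_neg at hcon
  rcases le_or_gt r d with hrd | hrd
  · -- r ≤ d : compare N (v - u) with (d - r) * a + N e
    have h1 : N (v - u) ≤ (d - r) * a + N e := by
      have h2 : v - u = (r - d) • uh + e := by
        rw [he, huuh]
        module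
      rw [h2]
      refine (hNadd _ _).trans ?_
      rw [hNsmul, ← ha, abs_of_nonpos (by linarith)]
      simp
    rw [hmed'] at h1
    have h3 : (2 * r - d) * a ≤ 2 * N e := by linarith
    have h4 : 0 < 2 * r - d := by linarith
    have k1 : (2 * r - d) * m ≤ (2 * r - d) * a := mul_le_mul_of_nonneg_left hma h4.le
    have k3 : (2 * r - d) * m ≤ (r / 2) * m := by
      calc (2 * r - d) * m ≤ (2 * r - d) * a := k1
        _ ≤ 2 * N e := h3
        _ ≤ 2 * (r * m / 4) := by linarith
        _ = (r / 2) * m := by ring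
    have k4 : 2 * r - d ≤ r / 2 := le_of_mul_le_mul_right k3 hm0
    linarith
  · -- d < r : convexity argument
    set l : ℝ := d / r with hl
    have hl0 : 0 < l := div_pos hd hr
    have hl1 : l < 1 := (div_lt_one hr).mpr hrd
    have hlr : l * r = d := by rw [hl]; field_simp
    have hdecomp : v - u = (1 - l) • v + l • e := by
      rw [he, huuh, ← hlr]
      module
    have h1 : N (v - u) ≤ (1 - l) * N v + l * N e := by
      rw [hdecomp]
      refine (hNadd _ _).trans ?_
      rw [hNsmul, hNsmul, abs_of_pos hl0, abs_of_nonneg (by linarith : (0:ℝ) ≤ 1 - l)]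
    rw [hmed'] at h1
    have h2 : N v ≤ N e := by
      have h3 : l * N v ≤ l * N e := by linarith
      exact le_of_mul_le_mul_left h3 hl0
    have k1 : r * m ≤ r * a := mul_le_mul_of_nonneg_left hma hr.le
    have k2 : 0 < r * m := mul_pos hr hm0
    linarith
end

section
/- Let ‖·‖ be a norm on ℝ^n. There exists ε_1 ∈ (0, π/2) depending only on ‖·‖ such that whenever (A_1, A_2, A_3) is self-contracted with respect to ‖·‖ and the Euclidean angle ∠A_1 A_2 A_3 ≤ 2ε_1, then |A_2 - A_3| ≤ (3/4)·|A_1 - A_2|. -/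
open scoped RealInnerProductSpace

set_option maxHeartbeats 1000000


/-- There is `ε₁ ∈ (0, π/2)` depending only on the norm `N` such that whenever
`(A₁, A₂, A₃)` is self-contracted with respect to `N` and the Euclidean angle
`∠A₁A₂A₃ ≤ 2ε₁`, then `|A₂ - A₃| ≤ (3/4)·|A₁ - A₂|`. -/
theorem selfContracted_small_angle {n : ℕ}
    (N : EuclideanSpace ℝ (Fin n) → ℝ)
    (hN0 : ∀ x, N x = 0 ↔ x = 0)
    (hNsmul : ∀ (c : ℝ) x, N (c • x) = |c| * N x)
    (hNadd : ∀ x y, N (x + y) ≤ N x + N y) :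
    ∃ ε₁ : ℝ, 0 < ε₁ ∧ ε₁ < Real.pi / 2 ∧
      ∀ A₁ A₂ A₃ : EuclideanSpace ℝ (Fin n),
        N (A₃ - A₂) ≤ N (A₃ - A₁) →
        EuclideanGeometry.angle A₁ A₂ A₃ ≤ 2 * ε₁ →
        ‖A₂ - A₃‖ ≤ 3 / 4 * ‖A₁ - A₂‖ := by
  have hpi := Real.pi_gt_three
  rcases Nat.eq_zero_or_pos n with hn | hn
  · subst hn
    refine ⟨1, one_pos, by linarith, ?_⟩
    intro A₁ A₂ A₃ _ _
    have h23 : A₂ - A₃ = 0 := Subsingleton.elim _ _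
    rw [h23, norm_zero]
    positivity
  -- basic properties of N
  have hNzero : N 0 = 0 := (hN0 0).mpr rfl
  have hNneg : ∀ x, 0 ≤ N x := by
    intro x
    have h1 : N (x + (-1 : ℝ) • x) ≤ N x + N ((-1 : ℝ) • x) := hNadd _ _
    rw [hNsmul] at h1
    simp at h1
    nlinarith [h1]
  -- upper bound : N x ≤ C₀ * ‖x‖
  set C₀ : ℝ := (∑ i : Fin n, N (EuclideanSpace.single i (1 : ℝ))) + 1 with hC₀
  have hC₀pos : 0 < C₀ := by
    have : 0 ≤ ∑ i : Fin n, N (EuclideanSpace.single i (1 : ℝ)) :=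
      Finset.sum_nonneg fun i _ => hNneg _
    simp only [hC₀]; linarith
  have hupper : ∀ x, N x ≤ C₀ * ‖x‖ := by
    intro x
    have hx : x = ∑ i : Fin n, x i • EuclideanSpace.single i (1 : ℝ) := by
      have := (EuclideanSpace.basisFun (Fin n) ℝ).toBasis.sum_repr x
      simpa [EuclideanSpace.basisFun_apply, EuclideanSpace.basisFun_repr] using this.symm
    have hsum : N (∑ i : Fin n, x i • EuclideanSpace.single i (1 : ℝ)) ≤
        ∑ i : Fin n, N (x i • EuclideanSpace.single i (1 : ℝ)) :=
      Finset.le_sum_of_subadditive N hNzero.le hNadd _ _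
    have hcoord : ∀ i : Fin n, |x i| ≤ ‖x‖ := by
      intro i
      have h1 : ⟪EuclideanSpace.single i (1 : ℝ), x⟫ = x i := by
        rw [EuclideanSpace.inner_single_left]; simp
      have h2 := abs_real_inner_le_norm (EuclideanSpace.single i (1 : ℝ)) x
      rw [h1, EuclideanSpace.norm_single] at h2
      simpa using h2
    calc N x ≤ ∑ i : Fin n, N (x i • EuclideanSpace.single i (1 : ℝ)) := by
          conv_lhs => rw [hx]
          exact hsum
      _ = ∑ i : Fin n, |x i| * N (EuclideanSpace.single i (1 : ℝ)) := by
          simp [hNsmul]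
      _ ≤ ∑ i : Fin n, ‖x‖ * N (EuclideanSpace.single i (1 : ℝ)) := by
          apply Finset.sum_le_sum
          intro i _
          exact mul_le_mul_of_nonneg_right (hcoord i) (hNneg _)
      _ = (∑ i : Fin n, N (EuclideanSpace.single i (1 : ℝ))) * ‖x‖ := by
          rw [← Finset.mul_sum, mul_comm]
      _ ≤ C₀ * ‖x‖ := by
          apply mul_le_mul_of_nonneg_right _ (norm_nonneg x)
          simp [hC₀]
  -- N is continuous
  have hNcont : Continuous N := by
    have hlip : LipschitzWith C₀.toNNReal N := by
      apply LipschitzWith.of_dist_le_mul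
      intro x y
      rw [Real.dist_eq, dist_eq_norm]
      have h1 : N x - N y ≤ N (x - y) := by
        have := hNadd (x - y) y; simp at this; linarith
      have h2 : N y - N x ≤ N (x - y) := by
        have h3 := hNadd (y - x) x
        simp at h3
        have h4 : N (y - x) = N (x - y) := by
          have : y - x = (-1 : ℝ) • (x - y) := by module
          rw [this, hNsmul]; simp
        linarith
      have h5 : |N x - N y| ≤ N (x - y) := abs_le.mpr ⟨by linarith, h1⟩
      calc |N x - N y| ≤ N (x - y) := h5
        _ ≤ C₀ * ‖x - y‖ := hupper _
        _ = C₀.toNNReal * ‖x - y‖ := by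
            rw [Real.coe_toNNReal _ hC₀pos.le]
    exact hlip.continuous
  -- minimum of N on the unit sphere
  have hsne : (Metric.sphere (0 : EuclideanSpace ℝ (Fin n)) 1).Nonempty := by
    haveI : Nonempty (Fin n) := ⟨⟨0, hn⟩⟩
    exact NormedSpace.sphere_nonempty.mpr zero_le_one
  obtain ⟨x₀, hx₀s, hx₀min⟩ :=
    (isCompact_sphere (0 : EuclideanSpace ℝ (Fin n)) 1).exists_isMinOn hsne
      hNcont.continuousOn
  set c : ℝ := N x₀ with hc
  have hx₀norm : ‖x₀‖ = 1 := by simpa using hx₀s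
  have hcpos : 0 < c := by
    rcases lt_or_eq_of_le (hNneg x₀) with h | h
    · exact h
    · exfalso
      have : x₀ = 0 := (hN0 x₀).mp h.symm
      rw [this] at hx₀norm; simp at hx₀norm
  have hclow : ∀ f : EuclideanSpace ℝ (Fin n), ‖f‖ = 1 → c ≤ N f := by
    intro f hf
    exact hx₀min (by simpa [Metric.mem_sphere, dist_eq_norm] using hf)
  have hcC : c ≤ C₀ := by
    have := hupper x₀
    rw [hx₀norm] at this; simpa [hc] using this
  -- choose ε₁
  refine ⟨c / (16 * C₀), by positivity, ?_, ?_⟩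
  · have h1 : c / (16 * C₀) ≤ 1 / 16 := by
      rw [div_le_div_iff₀ (by positivity) (by norm_num)]
      nlinarith
    linarith
  intro A₁ A₂ A₃ hsc hangle
  by_contra hcon
  push_neg at hcon
  set u : EuclideanSpace ℝ (Fin n) := A₁ - A₂ with hu
  set v : EuclideanSpace ℝ (Fin n) := A₃ - A₂ with hv
  set a : ℝ := ‖u‖ with ha
  set b : ℝ := ‖v‖ with hb
  have hba : 3 / 4 * a < b := by
    rw [ha, hb, hu, hv]
    have h1 : ‖A₂ - A₃‖ = ‖A₃ - A₂‖ := norm_sub_rev _ _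
    have h2 : ‖A₁ - A₂‖ = ‖A₁ - A₂‖ := rfl
    rw [h1] at hcon; exact hcon
  set θ : ℝ := EuclideanGeometry.angle A₁ A₂ A₃ with hθ
  have hθeq : θ = InnerProductGeometry.angle u v := rfl
  have hθ0 : 0 ≤ θ := by rw [hθeq]; exact InnerProductGeometry.angle_nonneg _ _
  have hC₀ne : C₀ ≠ 0 := hC₀pos.ne'
  have hθsmall : θ ≤ c / (8 * C₀) := by
    have h2 : 2 * (c / (16 * C₀)) = c / (8 * C₀) := by field_simp; ring
    rw [hθ]; rw [h2] at hangle; exact hangle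
  have hθsmall' : θ ≤ 1 / 8 := by
    have h1 : c / (8 * C₀) ≤ 1 / 8 := by
      rw [div_le_div_iff₀ (by positivity) (by norm_num)]
      nlinarith
    linarith
  -- u ≠ 0
  have hane : a ≠ 0 := by
    intro h0
    have hu0 : u = 0 := by rwa [ha, norm_eq_zero] at h0
    have : θ = Real.pi / 2 := by
      rw [hθeq, hu0]
      exact InnerProductGeometry.angle_zero_left _
    rw [this] at hθsmall'
    linarith
  have hapos : 0 < a := lt_of_le_of_ne (norm_nonneg u) (Ne.symm hane)
  have hbpos : 0 < b := by linarith
  have hvne : v ≠ 0 := by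
    intro h0
    rw [hb, h0, norm_zero] at hbpos; exact lt_irrefl _ hbpos
  have hune : u ≠ 0 := by
    intro h0
    rw [ha, h0, norm_zero] at hapos; exact lt_irrefl _ hapos
  set e : EuclideanSpace ℝ (Fin n) := a⁻¹ • u with he
  set f : EuclideanSpace ℝ (Fin n) := b⁻¹ • v with hf
  have henorm : ‖e‖ = 1 := by
    rw [he, norm_smul, Real.norm_eq_abs, abs_inv, abs_of_pos hapos, ← ha,
      inv_mul_cancel₀ hane]
  have hfnorm : ‖f‖ = 1 := by
    rw [hf, norm_smul, Real.norm_eq_abs, abs_inv, abs_of_pos hbpos, ← hb,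
      inv_mul_cancel₀ hbpos.ne']
  have hueq : u = a • e := by
    rw [he, smul_smul, mul_inv_cancel₀ hane, one_smul]
  have hveq : v = b • f := by
    rw [hf, smul_smul, mul_inv_cancel₀ hbpos.ne', one_smul]
  -- inner product and chord estimate
  have hcos : ⟪e, f⟫ = Real.cos θ := by
    rw [hθeq, InnerProductGeometry.cos_angle, he, hf, real_inner_smul_left,
      real_inner_smul_right, ← ha, ← hb]
    field_simp
  have hef2 : ‖e - f‖ ^ 2 = 2 - 2 * Real.cos θ := by
    rw [norm_sub_sq_real, henorm, hfnorm, hcos]; ring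
  have hef : ‖e - f‖ ≤ θ := by
    have h1 := Real.one_sub_sq_div_two_le_cos (x := θ)
    have h2 : ‖e - f‖ ^ 2 ≤ θ ^ 2 := by rw [hef2]; nlinarith
    have h3 := Real.sqrt_le_sqrt h2
    rwa [Real.sqrt_sq (norm_nonneg (e - f)), Real.sqrt_sq hθ0] at h3
  have heffe : ‖f - e‖ ≤ θ := by rwa [norm_sub_rev] at hef
  -- self-contracted rewritten
  have hsc' : N v ≤ N (v - u) := by
    have h1 : A₃ - A₁ = v - u := by rw [hv, hu]; abel
    rw [h1] at hsc; exact hsc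
  have hdecomp : v - u = (b - a) • f + a • (f - e) := by
    rw [hueq, hveq]; module
  have hNv : N v = b * N f := by
    rw [hveq, hNsmul, abs_of_pos hbpos]
  have hkey : b * N f ≤ |b - a| * N f + a * (C₀ * θ) := by
    calc b * N f = N v := hNv.symm
      _ ≤ N (v - u) := hsc'
      _ = N ((b - a) • f + a • (f - e)) := by rw [hdecomp]
      _ ≤ N ((b - a) • f) + N (a • (f - e)) := hNadd _ _
      _ = |b - a| * N f + a * N (f - e) := by
          rw [hNsmul (b - a) f, hNsmul a (f - e), abs_of_pos hapos]
      _ ≤ |b - a| * N f + a * (C₀ * θ) := by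
          have h1 : N (f - e) ≤ C₀ * ‖f - e‖ := hupper _
          have h2 : C₀ * ‖f - e‖ ≤ C₀ * θ := by
            exact mul_le_mul_of_nonneg_left heffe hC₀pos.le
          have h3 : N (f - e) ≤ C₀ * θ := le_trans h1 h2
          nlinarith
  have hNf : c ≤ N f := hclow f hfnorm
  have habs : a / 2 ≤ b - |b - a| := by
    rcases abs_cases (b - a) with ⟨h1, h2⟩ | ⟨h1, h2⟩ <;> rw [h1] <;> linarith
  -- derive contradiction
  have hCθ : C₀ * θ ≤ c / 8 := by
    have h1 : C₀ * θ ≤ C₀ * (c / (8 * C₀)) := mul_le_mul_of_nonneg_left hθsmall hC₀pos.le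
    have h2 : C₀ * (c / (8 * C₀)) = c / 8 := by field_simp
    linarith
  have h2 : (b - |b - a|) * N f ≤ a * (C₀ * θ) := by
    rw [sub_mul]; linarith
  have h3 : a / 2 * N f ≤ (b - |b - a|) * N f :=
    mul_le_mul_of_nonneg_right habs (hNneg f)
  have h4 : a / 2 * c ≤ a / 2 * N f :=
    mul_le_mul_of_nonneg_left hNf (by positivity)
  have h5 : a * (C₀ * θ) ≤ a * (c / 8) := mul_le_mul_of_nonneg_left hCθ hapos.le
  have h6 : a / 2 * c ≤ a * (c / 8) := le_trans h4 (le_trans h3 (le_trans h2 h5))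
  nlinarith [mul_pos hapos hcpos]
end

section
/- Let ‖·‖ be a norm on ℝ^n and ε_1 > 0 the constant from the small-angle contraction lemma (i.e., whenever (P,Q,R) is self-contracted and ∠PQR ≤ 2ε_1 then |QR| ≤ (3/4)|PQ|). Suppose (A_1, ..., A_r) is self-contracted with respect to ‖·‖, has alternating directions along an axis x = span{ν} (i.e., the signs of (A_{k+1} - A_k)·ν alternate in k), and each segment [A_k A_{k+1}] makes angle at most ε_1 with the line x. Then the total Euclidean length satisfies ℓ(A_1, ..., A_r) = Σ_{k=1}^{r-1} |A_k A_{k+1}| ≤ 4·|A_1 - A_2|. -/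
open InnerProductGeometry

open Real
local notation "⟪" x ", " y "⟫_ℝ" => @inner ℝ _ _ x y

lemma angle_triangle_unit_s10 {n : ℕ} (x z m : EuclideanSpace ℝ (Fin n))
    (hx : ‖x‖ = 1) (hz : ‖z‖ = 1) (hm : ‖m‖ = 1) :
    InnerProductGeometry.angle x z ≤
      InnerProductGeometry.angle x m + InnerProductGeometry.angle m z := by
  set a := InnerProductGeometry.angle x m with ha
  set b := InnerProductGeometry.angle m z with hb
  have ha0 : 0 ≤ a := angle_nonneg _ _
  have hb0 : 0 ≤ b := angle_nonneg _ _
  by_cases hab : π ≤ a + b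
  · exact le_trans (angle_le_pi _ _) hab
  push_neg at hab
  have hcosa : Real.cos a = ⟪x, m⟫_ℝ := by
    rw [ha, cos_angle, hx, hm]; ring_nf
  have hcosb : Real.cos b = ⟪m, z⟫_ℝ := by
    rw [hb, cos_angle, hm, hz]; ring_nf
  set x' := x - Real.cos a • m with hx'
  set z' := z - Real.cos b • m with hz'
  have hxm2 : ‖m‖ ^ 2 = 1 := by rw [hm]; norm_num
  have hnx' : ‖x'‖ ^ 2 = Real.sin a ^ 2 := by
    rw [hx', norm_sub_sq_real, real_inner_smul_right, norm_smul, hx, ← hcosa]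
    simp only [Real.norm_eq_abs, mul_pow, sq_abs, hm]
    nlinarith [Real.sin_sq_add_cos_sq a]
  have hnz' : ‖z'‖ ^ 2 = Real.sin b ^ 2 := by
    have h2 : ⟪z, m⟫_ℝ = Real.cos b := by rw [hcosb, real_inner_comm]
    rw [hz', norm_sub_sq_real, real_inner_smul_right, norm_smul, hz, h2]
    simp only [Real.norm_eq_abs, mul_pow, sq_abs, hm]
    nlinarith [Real.sin_sq_add_cos_sq b]
  have hsa : 0 ≤ Real.sin a := Real.sin_nonneg_of_nonneg_of_le_pi ha0 (angle_le_pi _ _)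
  have hsb : 0 ≤ Real.sin b := Real.sin_nonneg_of_nonneg_of_le_pi hb0 (angle_le_pi _ _)
  have hnx : ‖x'‖ = Real.sin a := by
    rw [← Real.sqrt_sq (norm_nonneg x'), hnx', Real.sqrt_sq hsa]
  have hnz : ‖z'‖ = Real.sin b := by
    rw [← Real.sqrt_sq (norm_nonneg z'), hnz', Real.sqrt_sq hsb]
  have hinner : ⟪x, z⟫_ℝ = Real.cos a * Real.cos b + ⟪x', z'⟫_ℝ := by
    have : ⟪x', z'⟫_ℝ = ⟪x, z⟫_ℝ - Real.cos b * ⟪x, m⟫_ℝ - Real.cos a * ⟪m, z⟫_ℝ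
        + Real.cos a * Real.cos b * ⟪m, m⟫_ℝ := by
      rw [hx', hz']
      simp only [inner_sub_left, inner_sub_right, real_inner_smul_left, real_inner_smul_right]
      ring
    rw [this, real_inner_self_eq_norm_sq, hxm2, ← hcosa, ← hcosb]
    ring
  have hbound : Real.cos (a + b) ≤ ⟪x, z⟫_ℝ := by
    have h1 : |⟪x', z'⟫_ℝ| ≤ ‖x'‖ * ‖z'‖ := abs_real_inner_le_norm _ _
    rw [hnx, hnz] at h1
    rw [Real.cos_add, hinner]
    have := neg_abs_le ⟪x', z'⟫_ℝ
    linarith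
  have hangle : InnerProductGeometry.angle x z = Real.arccos ⟪x, z⟫_ℝ := by
    rw [InnerProductGeometry.angle, hx, hz]; norm_num
  rw [hangle]
  have hanti : ∀ u v : ℝ, u ≤ v → Real.arccos v ≤ Real.arccos u := by
    intro u v huv
    rw [Real.arccos, Real.arccos]
    have := Real.monotone_arcsin huv
    linarith
  calc Real.arccos ⟪x, z⟫_ℝ ≤ Real.arccos (Real.cos (a + b)) := hanti _ _ hbound
    _ = a + b := Real.arccos_cos (by linarith) hab.le

lemma angle_triangle_aux {n : ℕ} (x z m : EuclideanSpace ℝ (Fin n))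
    (hx : x ≠ 0) (hz : z ≠ 0) (hm : ‖m‖ = 1) :
    InnerProductGeometry.angle x z ≤
      InnerProductGeometry.angle x m + InnerProductGeometry.angle m z := by
  have hnx : (0:ℝ) < ‖x‖⁻¹ := inv_pos.2 (norm_pos_iff.2 hx)
  have hnz : (0:ℝ) < ‖z‖⁻¹ := inv_pos.2 (norm_pos_iff.2 hz)
  have hux : ‖(‖x‖⁻¹ • x)‖ = 1 := by
    rw [norm_smul, Real.norm_eq_abs, abs_of_pos hnx, inv_mul_cancel₀ (norm_ne_zero_iff.2 hx)]
  have huz : ‖(‖z‖⁻¹ • z)‖ = 1 := by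
    rw [norm_smul, Real.norm_eq_abs, abs_of_pos hnz, inv_mul_cancel₀ (norm_ne_zero_iff.2 hz)]
  have h := angle_triangle_unit_s10 (‖x‖⁻¹ • x) (‖z‖⁻¹ • z) m hux huz hm
  rwa [angle_smul_left_of_pos _ _ hnx, angle_smul_right_of_pos _ _ hnz,
    angle_smul_left_of_pos _ _ hnx, angle_smul_right_of_pos _ _ hnz] at h

lemma inner_pos_of_angle_lt {n : ℕ} (x m : EuclideanSpace ℝ (Fin n))
    (hx : x ≠ 0) (hm : ‖m‖ = 1) (h : InnerProductGeometry.angle x m < π / 2) :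
    0 < ⟪x, m⟫_ℝ := by
  have hcos : 0 < Real.cos (InnerProductGeometry.angle x m) := by
    apply Real.cos_pos_of_mem_Ioo
    constructor
    · linarith [angle_nonneg x m, Real.pi_pos]
    · exact h
  rw [cos_angle, hm, mul_one] at hcos
  have hn : (0:ℝ) < ‖x‖ := norm_pos_iff.2 hx
  rcases div_pos_iff.mp hcos with ⟨h1, _⟩ | ⟨_, h2⟩
  · exact h1
  · linarith

lemma lineAngle_cases {n : ℕ} (v ν : EuclideanSpace ℝ (Fin n)) (hν : ‖ν‖ = 1) {ε : ℝ}
    (h : lineSubspaceAngle v (Submodule.span ℝ {ν}) ≤ ε) :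
    InnerProductGeometry.angle v ν ≤ ε ∨ InnerProductGeometry.angle v (-ν) ≤ ε := by
  have hν0 : ν ≠ 0 := by intro h0; rw [h0, norm_zero] at hν; norm_num at hν
  have hset : {θ : ℝ | ∃ w ∈ Submodule.span ℝ {ν}, w ≠ 0 ∧ θ = InnerProductGeometry.angle v w}
      = {InnerProductGeometry.angle v ν, InnerProductGeometry.angle v (-ν)} := by
    ext θ
    constructor
    · rintro ⟨w, hw, hw0, rfl⟩
      rcases Submodule.mem_span_singleton.1 hw with ⟨c, rfl⟩
      have hc : c ≠ 0 := by rintro rfl; simp at hw0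
      rcases hc.lt_or_gt with hc | hc
      · rw [angle_smul_right_of_neg _ _ hc]; exact Set.mem_insert_iff.2 (Or.inr rfl)
      · rw [angle_smul_right_of_pos _ _ hc]; exact Set.mem_insert_iff.2 (Or.inl rfl)
    · intro hθ
      rcases Set.mem_insert_iff.1 hθ with rfl | hθ
      swap
      rcases Set.mem_singleton_iff.1 hθ with rfl
      · exact ⟨-ν, Submodule.neg_mem _ (Submodule.mem_span_singleton_self ν),
          neg_ne_zero.2 hν0, rfl⟩
      · exact ⟨ν, Submodule.mem_span_singleton_self ν, hν0, rfl⟩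
  rw [lineSubspaceAngle, hset, csInf_pair] at h
  rcases le_total (InnerProductGeometry.angle v ν) (InnerProductGeometry.angle v (-ν)) with hle | hle
  · left; rw [inf_eq_left.2 hle] at h; exact h
  · right; rw [inf_eq_right.2 hle] at h; exact h
/-- A self-contracted polygonal line with alternating directions along an axis
`span{ν}`, all of whose segments are `ε₁`-horizontal with respect to that axis
(where `ε₁` satisfies the small-angle contraction property), has total Euclidean
length at most `4·|A₀ - A₁|`. -/
theorem alternating_horizontal_length_bound {n : ℕ}
    (N : EuclideanSpace ℝ (Fin n) → ℝ)
    (hN0 : ∀ x, N x = 0 ↔ x = 0)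
    (hNsmul : ∀ (c : ℝ) x, N (c • x) = |c| * N x)
    (hNadd : ∀ x y, N (x + y) ≤ N x + N y)
    (ε₁ : ℝ) (hε₁ : 0 < ε₁)
    (hcontr : ∀ P Q R : EuclideanSpace ℝ (Fin n),
      N (R - Q) ≤ N (R - P) → EuclideanGeometry.angle P Q R ≤ 2 * ε₁ →
      ‖Q - R‖ ≤ 3 / 4 * ‖P - Q‖)
    (r : ℕ) (hr : 1 ≤ r) (A : ℕ → EuclideanSpace ℝ (Fin n))
    (hsc : ∀ i j k : ℕ, i ≤ j → j ≤ k → k ≤ r →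
      N (A k - A j) ≤ N (A k - A i))
    (ν : EuclideanSpace ℝ (Fin n)) (hν : ‖ν‖ = 1)
    (halt : ∀ k : ℕ, k + 1 < r →
      (inner ℝ (A (k + 2) - A (k + 1)) ν : ℝ) * (inner ℝ (A (k + 1) - A k) ν : ℝ) < 0)
    (hhor : ∀ k : ℕ, k < r →
      lineSubspaceAngle (A (k + 1) - A k) (Submodule.span ℝ {ν}) ≤ ε₁) :
    ∑ k ∈ Finset.range r, ‖A (k + 1) - A k‖ ≤ 4 * ‖A 0 - A 1‖ := by

  have c0 : ‖A 0 - A 1‖ = ‖A 1 - A 0‖ := norm_sub_rev _ _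
  have hresolve : ∀ v : EuclideanSpace ℝ (Fin n), v ≠ 0 → ε₁ < π / 2 →
      lineSubspaceAngle v (Submodule.span ℝ {ν}) ≤ ε₁ →
      (0 < ⟪v, ν⟫_ℝ → InnerProductGeometry.angle v ν ≤ ε₁) ∧
      (⟪v, ν⟫_ℝ < 0 → InnerProductGeometry.angle v (-ν) ≤ ε₁) := by
    intro v hv0 hεs hline
    have hnν : ‖(-ν)‖ = 1 := by rw [norm_neg, hν]
    rcases lineAngle_cases v ν hν hline with h1 | h2
    · refine ⟨fun _ => h1, fun hneg => ?_⟩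
      exfalso
      have := inner_pos_of_angle_lt v ν hv0 hν (lt_of_le_of_lt h1 hεs)
      linarith
    · refine ⟨fun hpos => ?_, fun _ => h2⟩
      exfalso
      have := inner_pos_of_angle_lt v (-ν) hv0 hnν (lt_of_le_of_lt h2 hεs)
      rw [inner_neg_right] at this
      linarith
  have key : ∀ k, k < r → ‖A (k + 1) - A k‖ ≤ (3/4 : ℝ) ^ k * ‖A 1 - A 0‖ := by
    intro k
    induction k with
    | zero => intro _; simp
    | succ k ih =>
      intro hk1
      have hkr : k < r := by omega
      have hIH := ih hkr
      have hang : EuclideanGeometry.angle (A k) (A (k + 1)) (A (k + 2)) ≤ 2 * ε₁ := by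
        by_cases hπ : π ≤ 2 * ε₁
        · exact le_trans (EuclideanGeometry.angle_le_pi _ _ _) hπ
        · push_neg at hπ
          have hεs : ε₁ < π / 2 := by linarith
          have hprod := halt k (by omega)
          set u := A (k + 1) - A k with hu
          set w := A (k + 2) - A (k + 1) with hw
          have hu0 : u ≠ 0 := by
            intro h0
            rw [h0, inner_zero_left, mul_zero] at hprod
            exact lt_irrefl _ hprod
          have hw0 : w ≠ 0 := by
            intro h0
            rw [h0, inner_zero_left, zero_mul] at hprod
            exact lt_irrefl _ hprod
          have hru := hresolve u hu0 hεs (hhor k hkr)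
          have hrw := hresolve w hw0 hεs (hhor (k + 1) (by omega))
          have hgoal : EuclideanGeometry.angle (A k) (A (k + 1)) (A (k + 2))
              = InnerProductGeometry.angle (-u) w := by
            rw [EuclideanGeometry.angle, vsub_eq_sub, vsub_eq_sub, ← hw]
            congr 1
            rw [hu]; abel
          rw [hgoal]
          rcases lt_trichotomy (⟪u, ν⟫_ℝ) 0 with hneg | hzero | hpos
          · have hwpos : 0 < ⟪w, ν⟫_ℝ := by nlinarith
            have h1 := hru.2 hneg
            have h2 := hrw.1 hwpos
            have htri := angle_triangle_aux (-u) w ν (neg_ne_zero.2 hu0) hw0 hν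
            have e1 : InnerProductGeometry.angle (-u) ν = InnerProductGeometry.angle u (-ν) := by
              rw [← angle_neg_neg u (-ν), neg_neg]
            have e2 : InnerProductGeometry.angle ν w = InnerProductGeometry.angle w ν :=
              angle_comm _ _
            rw [e1, e2] at htri
            linarith
          · rw [hzero, mul_zero] at hprod; exact absurd hprod (lt_irrefl _)
          · have hwneg : ⟪w, ν⟫_ℝ < 0 := by nlinarith
            have h1 := hru.1 hpos
            have h2 := hrw.2 hwneg
            have htri := angle_triangle_aux (-u) w (-ν) (neg_ne_zero.2 hu0) hw0
              (by rw [norm_neg, hν])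
            have e1 : InnerProductGeometry.angle (-u) (-ν) = InnerProductGeometry.angle u ν :=
              angle_neg_neg _ _
            have e2 : InnerProductGeometry.angle (-ν) w = InnerProductGeometry.angle w (-ν) :=
              angle_comm _ _
            rw [e1, e2] at htri
            linarith
      have hN : N (A (k + 2) - A (k + 1)) ≤ N (A (k + 2) - A k) :=
        hsc k (k + 1) (k + 2) (by omega) (by omega) (by omega)
      have hstep := hcontr (A k) (A (k + 1)) (A (k + 2)) hN hang
      rw [norm_sub_rev (A (k + 1)), norm_sub_rev (A k)] at hstep
      calc ‖A (k + 1 + 1) - A (k + 1)‖ ≤ 3 / 4 * ‖A (k + 1) - A k‖ := hstep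
        _ ≤ 3 / 4 * ((3/4 : ℝ) ^ k * ‖A 1 - A 0‖) :=
            mul_le_mul_of_nonneg_left hIH (by norm_num)
        _ = (3/4 : ℝ) ^ (k + 1) * ‖A 1 - A 0‖ := by ring
  calc ∑ k ∈ Finset.range r, ‖A (k + 1) - A k‖
      ≤ ∑ k ∈ Finset.range r, (3/4 : ℝ) ^ k * ‖A 1 - A 0‖ :=
        Finset.sum_le_sum fun k hk => key k (Finset.mem_range.1 hk)
    _ = (∑ k ∈ Finset.range r, (3/4 : ℝ) ^ k) * ‖A 1 - A 0‖ := by rw [← Finset.sum_mul]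
    _ ≤ 4 * ‖A 1 - A 0‖ := by
        apply mul_le_mul_of_nonneg_right _ (norm_nonneg _)
        have h34 : (0:ℝ) ≤ (3/4 : ℝ) ^ r := by positivity
        rw [geom_sum_eq (by norm_num : (3/4 : ℝ) ≠ 1),
          div_le_iff_of_neg (by norm_num : (3/4 : ℝ) - 1 < 0)]
        nlinarith
    _ = 4 * ‖A 0 - A 1‖ := by rw [c0]
end

section
/- Let ν ∈ ℝ^n be a unit vector, ε ∈ (0, π/2), and let (A_1, ..., A_r) ⊂ ℝ^n satisfy: (A) each segment [A_i A_r], i = 1, ..., r-1, makes angle at most ε with the axis x = span{ν}; (B) each segment [A_k A_{k+1}] that makes angle at most ε with x has projection on x of the same sign as that of [A_{r-1} A_r], i.e., writing x_k = (A_k - A_r)·ν, one has (x_{k+1} - x_k)(x_r - x_{r-1}) ≥ 0. Then (x_r - x_1)(x_r - x_{r-1}) ≥ 0 and ℓ_x(A_1, ..., A_r) ≤ |x_r - x_1| + 2·cot(ε)·ℓ_{x^⊥}(A_1, ..., A_r). -/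
open InnerProductGeometry

lemma angle_set_eq {n : ℕ} (ν v : EuclideanSpace ℝ (Fin n)) (hν : ‖ν‖ = 1) :
    {θ : ℝ | ∃ w ∈ Submodule.span ℝ {ν}, w ≠ 0 ∧ θ = angle v w}
      = {angle v ν, Real.pi - angle v ν} := by
  have hν0 : ν ≠ 0 := by intro h; rw [h, norm_zero] at hν; norm_num at hν
  ext θ
  simp only [Set.mem_setOf_eq, Set.mem_insert_iff, Set.mem_singleton_iff]
  constructor
  · rintro ⟨w, hw, hw0, rfl⟩
    rw [Submodule.mem_span_singleton] at hw
    obtain ⟨t, rfl⟩ := hw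
    have ht : t ≠ 0 := by rintro rfl; simp at hw0
    rcases ht.lt_or_gt with h | h
    · right; rw [angle_smul_right_of_neg _ _ h, angle_neg_right]
    · left; rw [angle_smul_right_of_pos _ _ h]
  · rintro (rfl | rfl)
    · exact ⟨ν, Submodule.mem_span_singleton_self ν, hν0, rfl⟩
    · exact ⟨-ν, Submodule.neg_mem _ (Submodule.mem_span_singleton_self ν),
        neg_ne_zero.2 hν0, (angle_neg_right v ν).symm⟩

lemma lineSubspaceAngle_le_iff {n : ℕ} (ν v : EuclideanSpace ℝ (Fin n)) (hν : ‖ν‖ = 1)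
    {ε : ℝ} (hε0 : 0 < ε) (hε2 : ε < Real.pi / 2) :
    lineSubspaceAngle v (Submodule.span ℝ {ν}) ≤ ε ↔
      Real.cos ε ≤ |(inner ℝ v ν : ℝ)| / ‖v‖ := by
  have hπ := Real.pi_pos
  have hεmem : ε ∈ Set.Icc 0 Real.pi := ⟨hε0.le, by linarith⟩
  rw [lineSubspaceAngle, angle_set_eq ν v hν, csInf_pair, inf_le_iff]
  have h1 : angle v ν ≤ ε ↔ Real.cos ε ≤ (inner ℝ v ν : ℝ) / ‖v‖ := by
    rw [← Real.strictAntiOn_cos.le_iff_ge hεmem ⟨angle_nonneg v ν, angle_le_pi v ν⟩,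
      cos_angle, hν, mul_one]
  have h2 : Real.pi - angle v ν ≤ ε ↔ Real.cos ε ≤ -((inner ℝ v ν : ℝ) / ‖v‖) := by
    rw [← angle_neg_right,
      ← Real.strictAntiOn_cos.le_iff_ge hεmem ⟨angle_nonneg v (-ν), angle_le_pi v (-ν)⟩,
      cos_angle, norm_neg, hν, mul_one, inner_neg_right, neg_div]
  rw [h1, h2, ← le_abs, abs_div, abs_norm]

lemma pyth_decomp {n : ℕ} (ν v : EuclideanSpace ℝ (Fin n)) (hν : ‖ν‖ = 1) :
    ‖v‖ ^ 2 = (inner ℝ v ν : ℝ) ^ 2 + ‖v - (inner ℝ v ν : ℝ) • ν‖ ^ 2 := by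
  set a : ℝ := (inner ℝ v ν : ℝ) with ha
  have hv : v = a • ν + (v - a • ν) := by abel
  have horth : (inner ℝ (a • ν) (v - a • ν) : ℝ) = 0 := by
    rw [real_inner_smul_left, inner_sub_right, real_inner_smul_right,
      real_inner_self_eq_norm_sq, hν, real_inner_comm v ν]
    ring
  calc ‖v‖ ^ 2 = ‖a • ν + (v - a • ν)‖ ^ 2 := by rw [← hv]
    _ = ‖a • ν‖ ^ 2 + 2 * (inner ℝ (a • ν) (v - a • ν) : ℝ) + ‖v - a • ν‖ ^ 2 := by
        rw [← norm_add_sq_real]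
    _ = a ^ 2 + ‖v - a • ν‖ ^ 2 := by
        rw [horth, norm_smul, hν, Real.norm_eq_abs, mul_one, sq_abs]; ring

lemma horiz_bound {n : ℕ} (ν : EuclideanSpace ℝ (Fin n)) (hν : ‖ν‖ = 1)
    {ε : ℝ} (hε0 : 0 < ε) (hε2 : ε < Real.pi / 2) (v : EuclideanSpace ℝ (Fin n))
    (h : lineSubspaceAngle v (Submodule.span ℝ {ν}) ≤ ε) :
    (inner ℝ v ν : ℝ) ≠ 0 ∧
      ‖v - (inner ℝ v ν : ℝ) • ν‖ ≤ Real.tan ε * |(inner ℝ v ν : ℝ)| := by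
  have hπ := Real.pi_pos
  have hcos : 0 < Real.cos ε := Real.cos_pos_of_mem_Ioo ⟨by linarith, hε2⟩
  have hsin : 0 < Real.sin ε := Real.sin_pos_of_pos_of_lt_pi hε0 (by linarith)
  rw [lineSubspaceAngle_le_iff ν v hν hε0 hε2] at h
  set a : ℝ := (inner ℝ v ν : ℝ) with ha
  have hq : 0 < |a| / ‖v‖ := lt_of_lt_of_le hcos h
  have ha0 : a ≠ 0 := by
    intro h0; rw [h0] at hq; simp at hq
  refine ⟨ha0, ?_⟩
  have hv0 : v ≠ 0 := by
    intro h0; rw [h0] at hq; simp at hq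
  have hvn : 0 < ‖v‖ := norm_pos_iff.2 hv0
  have h1 : Real.cos ε * ‖v‖ ≤ |a| := by
    rw [le_div_iff₀ hvn] at h; exact h
  set b : ℝ := ‖v - a • ν‖ with hb
  have hbnn : 0 ≤ b := norm_nonneg _
  have hpy : ‖v‖ ^ 2 = a ^ 2 + b ^ 2 := pyth_decomp ν v hν
  have h2 : (Real.cos ε * b) ^ 2 ≤ (Real.sin ε * |a|) ^ 2 := by
    have hs : Real.sin ε ^ 2 = 1 - Real.cos ε ^ 2 := by
      have := Real.sin_sq_add_cos_sq ε; linarith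
    nlinarith [sq_nonneg a, sq_abs a, norm_nonneg v, mul_pos hcos hvn]
  have h3 : Real.cos ε * b ≤ Real.sin ε * |a| := by
    nlinarith [mul_nonneg hcos.le hbnn, mul_nonneg hsin.le (abs_nonneg a)]
  rw [Real.tan_eq_sin_div_cos]
  rw [div_mul_eq_mul_div, le_div_iff₀ hcos]
  linarith

lemma vert_bound {n : ℕ} (ν : EuclideanSpace ℝ (Fin n)) (hν : ‖ν‖ = 1)
    {ε : ℝ} (hε0 : 0 < ε) (hε2 : ε < Real.pi / 2) (v : EuclideanSpace ℝ (Fin n))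
    (h : ¬ lineSubspaceAngle v (Submodule.span ℝ {ν}) ≤ ε) :
    |(inner ℝ v ν : ℝ)| ≤ (Real.tan ε)⁻¹ * ‖v - (inner ℝ v ν : ℝ) • ν‖ := by
  have hπ := Real.pi_pos
  have hcos : 0 < Real.cos ε := Real.cos_pos_of_mem_Ioo ⟨by linarith, hε2⟩
  have hsin : 0 < Real.sin ε := Real.sin_pos_of_pos_of_lt_pi hε0 (by linarith)
  rw [lineSubspaceAngle_le_iff ν v hν hε0 hε2] at h
  push_neg at h
  set a : ℝ := (inner ℝ v ν : ℝ) with ha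
  set b : ℝ := ‖v - a • ν‖ with hb
  have hbnn : 0 ≤ b := norm_nonneg _
  rcases eq_or_ne v 0 with rfl | hv0
  · have : a = 0 := by simp [ha]
    rw [this, abs_zero]
    have htan : 0 < Real.tan ε := Real.tan_pos_of_pos_of_lt_pi_div_two hε0 hε2
    positivity
  · have hvn : 0 < ‖v‖ := norm_pos_iff.2 hv0
    have h1 : |a| < Real.cos ε * ‖v‖ := by
      rw [div_lt_iff₀ hvn] at h; linarith
    have hpy : ‖v‖ ^ 2 = a ^ 2 + b ^ 2 := pyth_decomp ν v hν
    have h2 : (Real.sin ε * |a|) ^ 2 ≤ (Real.cos ε * b) ^ 2 := by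
      have hs : Real.sin ε ^ 2 = 1 - Real.cos ε ^ 2 := by
        have := Real.sin_sq_add_cos_sq ε; linarith
      nlinarith [sq_abs a, abs_nonneg a, mul_pos hcos hvn]
    have h3 : Real.sin ε * |a| ≤ Real.cos ε * b := by
      nlinarith [mul_nonneg hcos.le hbnn, mul_nonneg hsin.le (abs_nonneg a)]
    rw [Real.tan_eq_sin_div_cos, inv_div, div_mul_eq_mul_div, le_div_iff₀ hsin]
    linarith

lemma horiz_of_bound {n : ℕ} (ν : EuclideanSpace ℝ (Fin n)) (hν : ‖ν‖ = 1)
    {ε : ℝ} (hε0 : 0 < ε) (hε2 : ε < Real.pi / 2) (v : EuclideanSpace ℝ (Fin n))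
    (ha0 : (inner ℝ v ν : ℝ) ≠ 0)
    (h : ‖v - (inner ℝ v ν : ℝ) • ν‖ ≤ Real.tan ε * |(inner ℝ v ν : ℝ)|) :
    lineSubspaceAngle v (Submodule.span ℝ {ν}) ≤ ε := by
  have hπ := Real.pi_pos
  have hcos : 0 < Real.cos ε := Real.cos_pos_of_mem_Ioo ⟨by linarith, hε2⟩
  have hsin : 0 < Real.sin ε := Real.sin_pos_of_pos_of_lt_pi hε0 (by linarith)
  rw [lineSubspaceAngle_le_iff ν v hν hε0 hε2]
  set a : ℝ := (inner ℝ v ν : ℝ) with ha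
  set b : ℝ := ‖v - a • ν‖ with hb
  have hbnn : 0 ≤ b := norm_nonneg _
  have hv0 : v ≠ 0 := fun h0 => ha0 (by simp [ha, h0])
  have hvn : 0 < ‖v‖ := norm_pos_iff.2 hv0
  have hpy : ‖v‖ ^ 2 = a ^ 2 + b ^ 2 := pyth_decomp ν v hν
  have habs : 0 < |a| := abs_pos.2 ha0
  rw [Real.tan_eq_sin_div_cos, div_mul_eq_mul_div, le_div_iff₀ hcos] at h
  rw [le_div_iff₀ hvn]
  have h2 : (Real.cos ε * ‖v‖) ^ 2 ≤ |a| ^ 2 := by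
    have hs : Real.sin ε ^ 2 = 1 - Real.cos ε ^ 2 := by
      have := Real.sin_sq_add_cos_sq ε; linarith
    nlinarith [sq_abs a, mul_nonneg hsin.le habs.le, mul_nonneg hcos.le hbnn]
  nlinarith [mul_pos hcos hvn]

lemma perp_diff {n : ℕ} (ν : EuclideanSpace ℝ (Fin n)) (hν : ‖ν‖ = 1)
    (u w : EuclideanSpace ℝ (Fin n)) :
    (Submodule.orthogonalProjection ((Submodule.span ℝ {ν})ᗮ) u : EuclideanSpace ℝ (Fin n)) -
      (Submodule.orthogonalProjection ((Submodule.span ℝ {ν})ᗮ) w : EuclideanSpace ℝ (Fin n)) =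
    (u - w) - (inner ℝ (u - w) ν : ℝ) • ν := by
  have hu := Submodule.starProjection_orthogonal_val (K := Submodule.span ℝ {ν}) u
  have hw := Submodule.starProjection_orthogonal_val (K := Submodule.span ℝ {ν}) w
  change (Submodule.span ℝ {ν})ᗮ.starProjection u - (Submodule.span ℝ {ν})ᗮ.starProjection w = _
  rw [hu, hw, Submodule.starProjection_unit_singleton ℝ hν, Submodule.starProjection_unit_singleton ℝ hν,
    inner_sub_left, sub_smul, real_inner_comm u ν, real_inner_comm w ν]
  abel

lemma seq_bound (r : ℕ) (hr : 1 ≤ r) (X Y : ℕ → ℝ) (c : ℝ) (hc : 0 < c)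
    (hY : ∀ k, 0 ≤ Y k)
    (hX0 : ∀ i, i < r → X i ≠ 0)
    (hXr : X r = 0)
    (H : ℕ → Prop)
    (hV : ∀ k, k < r → ¬ H k → |X (k+1) - X k| ≤ c * Y k)
    (hH : ∀ k, k < r → H k → 0 ≤ (X (k+1) - X k) * (X r - X (r-1)))
    (hC : ∀ k, k + 1 < r → X k * X (k+1) < 0 → H k) :
    0 ≤ (X r - X 0) * (X r - X (r-1)) ∧
      ∑ k ∈ Finset.range r, |X (k+1) - X k| ≤
        |X r - X 0| + 2 * c * ∑ k ∈ Finset.range r, Y k := by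
  have hw : X (r-1) ≠ 0 := hX0 (r-1) (by omega)
  have hw2 : 0 < X (r-1) * X (r-1) := mul_self_pos.2 hw
  have hsign : ∀ d, d ≤ r - 1 → 0 < X (r-1-d) * X (r-1) := by
    intro d
    induction d with
    | zero => intro _; simpa using hw2
    | succ d ih =>
      intro hd
      have ihd := ih (by omega)
      have hi1 : r - 1 - (d+1) + 1 = r - 1 - d := by omega
      have hir : r - 1 - (d+1) < r := by omega
      have hi1r : r - 1 - (d+1) + 1 < r := by omega
      set i := r - 1 - (d+1) with hidef
      by_contra hcon
      push_neg at hcon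
      have hXi : X i ≠ 0 := hX0 i hir
      have h1 : X i * X (r-1) < 0 := lt_of_le_of_ne hcon (mul_ne_zero hXi hw)
      have h2 : 0 < X (i+1) * X (r-1) := by rw [hi1]; exact ihd
      have h3 : X i * X (i+1) < 0 := by nlinarith
      have h4 := hH i hir (hC i hi1r h3)
      rw [hXr] at h4
      nlinarith
  have hsign' : ∀ i, i < r → 0 < X i * X (r-1) := by
    intro i hi
    have := hsign (r-1-i) (by omega)
    rwa [show r-1-(r-1-i) = i by omega] at this
  constructor
  · rw [hXr]
    have := hsign' 0 (by omega)
    nlinarith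
  · set s : ℝ := if 0 < X (r-1) then -1 else 1 with hs
    have hs1 : |s| = 1 := by
      rw [hs]; split_ifs <;> simp
    have hspos : 0 < s * (X r - X (r-1)) := by
      rw [hXr, hs]
      rcases hw.lt_or_gt with h | h
      · rw [if_neg (by linarith)]; linarith
      · rw [if_pos h]; linarith
    have key : ∀ k ∈ Finset.range r, |X (k+1) - X k| ≤ s * (X (k+1) - X k) + 2 * c * Y k := by
      intro k hk
      rw [Finset.mem_range] at hk
      have habs : |s * (X (k+1) - X k)| = |X (k+1) - X k| := by
        rw [abs_mul, hs1, one_mul]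
      by_cases hHk : H k
      · have h4 := hH k hk hHk
        rw [hXr] at h4 hspos
        have h5 : 0 ≤ s * (X (k+1) - X k) := by
          nlinarith [mul_nonneg h4 hspos.le]
        have h6 : |X (k+1) - X k| = s * (X (k+1) - X k) := by
          rw [← habs, abs_of_nonneg h5]
        have h7 : 0 ≤ 2 * c * Y k := by have := hY k; nlinarith
        linarith
      · have h4 := hV k hk hHk
        have h5 : -(s * (X (k+1) - X k)) ≤ |X (k+1) - X k| := by
          rw [← habs]; exact neg_le_of_neg_le (neg_abs_le _)
        linarith
    calc ∑ k ∈ Finset.range r, |X (k+1) - X k|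
        ≤ ∑ k ∈ Finset.range r, (s * (X (k+1) - X k) + 2 * c * Y k) :=
          Finset.sum_le_sum key
      _ = s * (X r - X 0) + 2 * c * ∑ k ∈ Finset.range r, Y k := by
          rw [Finset.sum_add_distrib, ← Finset.mul_sum, ← Finset.mul_sum,
            Finset.sum_range_sub]
      _ ≤ |X r - X 0| + 2 * c * ∑ k ∈ Finset.range r, Y k := by
          have h8 : s * (X r - X 0) ≤ |s * (X r - X 0)| := le_abs_self _
          rw [abs_mul, hs1, one_mul] at h8
          linarith

/-- If every segment `[Aᵢ A_r]` is `ε`-horizontal with respect to the axis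
`span{ν}` and every `ε`-horizontal step has `ν`-projection of the same sign as
the last step, then the first step also has that sign and
`ℓ_x ≤ |x_r - x_0| + 2·cot(ε)·ℓ_{x^⊥}`. -/
theorem horizontal_direction_bound {n : ℕ}
    (ν : EuclideanSpace ℝ (Fin n)) (hν : ‖ν‖ = 1)
    (ε : ℝ) (hε : 0 < ε ∧ ε < Real.pi / 2)
    (r : ℕ) (hr : 1 ≤ r) (A : ℕ → EuclideanSpace ℝ (Fin n))
    (hA : ∀ i : ℕ, i < r →
      lineSubspaceAngle (A r - A i) (Submodule.span ℝ {ν}) ≤ ε)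
    (hB : ∀ k : ℕ, k < r →
      lineSubspaceAngle (A (k + 1) - A k) (Submodule.span ℝ {ν}) ≤ ε →
      0 ≤ ((inner ℝ (A (k + 1) - A r) ν : ℝ) - (inner ℝ (A k - A r) ν : ℝ)) *
        ((inner ℝ (A r - A r) ν : ℝ) - (inner ℝ (A (r - 1) - A r) ν : ℝ))) :
    0 ≤ ((inner ℝ (A r - A r) ν : ℝ) - (inner ℝ (A 0 - A r) ν : ℝ)) *
        ((inner ℝ (A r - A r) ν : ℝ) - (inner ℝ (A (r - 1) - A r) ν : ℝ)) ∧
    ∑ k ∈ Finset.range r,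
        |(inner ℝ (A (k + 1) - A r) ν : ℝ) - (inner ℝ (A k - A r) ν : ℝ)| ≤
      |(inner ℝ (A r - A r) ν : ℝ) - (inner ℝ (A 0 - A r) ν : ℝ)| +
        2 * (Real.tan ε)⁻¹ *
          ∑ k ∈ Finset.range r,
            ‖(Submodule.orthogonalProjection ((Submodule.span ℝ {ν})ᗮ) (A (k + 1)) :
                EuclideanSpace ℝ (Fin n)) -
              (Submodule.orthogonalProjection ((Submodule.span ℝ {ν})ᗮ) (A k) :
                EuclideanSpace ℝ (Fin n))‖ := by
  obtain ⟨hε0, hε2⟩ := hε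
  have hπ := Real.pi_pos
  have htan : 0 < Real.tan ε := Real.tan_pos_of_pos_of_lt_pi_div_two hε0 hε2
  -- F1: every A i - A r is horizontal, quantitatively
  have hF1 : ∀ i, i < r → (inner ℝ (A i - A r) ν : ℝ) ≠ 0 ∧
      ‖(A i - A r) - (inner ℝ (A i - A r) ν : ℝ) • ν‖ ≤
        Real.tan ε * |(inner ℝ (A i - A r) ν : ℝ)| := by
    intro i hi
    have h := horiz_bound ν hν hε0 hε2 (A r - A i) (hA i hi)
    rw [show A r - A i = -(A i - A r) by abel, inner_neg_left] at h
    obtain ⟨h1, h2⟩ := h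
    refine ⟨fun h0 => h1 (by rw [h0, neg_zero]), ?_⟩
    rw [show -(A i - A r) - (-(inner ℝ (A i - A r) ν : ℝ)) • ν
        = -((A i - A r) - (inner ℝ (A i - A r) ν : ℝ) • ν) by rw [neg_smul]; abel,
      norm_neg, abs_neg] at h2
    exact h2
  -- step inner ℝ identity
  have e1 : ∀ k : ℕ, (inner ℝ (A (k+1) - A k) ν : ℝ)
      = (inner ℝ (A (k+1) - A r) ν : ℝ) - (inner ℝ (A k - A r) ν : ℝ) := by
    intro k
    rw [show A (k+1) - A k = (A (k+1) - A r) - (A k - A r) by abel, inner_sub_left]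
  exact seq_bound r hr
    (fun i => (inner ℝ (A i - A r) ν : ℝ))
    (fun k => ‖(Submodule.orthogonalProjection ((Submodule.span ℝ {ν})ᗮ) (A (k + 1)) :
                EuclideanSpace ℝ (Fin n)) -
              (Submodule.orthogonalProjection ((Submodule.span ℝ {ν})ᗮ) (A k) :
                EuclideanSpace ℝ (Fin n))‖)
    (Real.tan ε)⁻¹ (inv_pos.2 htan)
    (fun k => norm_nonneg _)
    (fun i hi => (hF1 i hi).1)
    (by simp)
    (fun k => lineSubspaceAngle (A (k + 1) - A k) (Submodule.span ℝ {ν}) ≤ ε)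
    (by -- vertical bound
      intro k hk hHk
      have h := vert_bound ν hν hε0 hε2 (A (k+1) - A k) hHk
      rw [perp_diff ν hν (A (k+1)) (A k), ← e1 k]
      exact h)
    (fun k hk hHk => hB k hk hHk)
    (by -- crossing
      intro k hk1 hpq
      have hF0 := hF1 k (by omega)
      have hF1' := hF1 (k+1) hk1
      set p : ℝ := (inner ℝ (A k - A r) ν : ℝ) with hp
      set q : ℝ := (inner ℝ (A (k+1) - A r) ν : ℝ) with hq
      apply horiz_of_bound ν hν hε0 hε2 (A (k+1) - A k)
      · rw [e1 k]
        intro h0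
        rw [show q = p by linarith] at hpq
        nlinarith
      · have e3 : (A (k+1) - A k) - (inner ℝ (A (k+1) - A k) ν : ℝ) • ν
            = ((A (k+1) - A r) - q • ν) - ((A k - A r) - p • ν) := by
          rw [e1 k, sub_smul]; abel
        have e4 : |q - p| = |q| + |p| := by
          rcases lt_trichotomy p 0 with h | h | h
          · have h' : 0 < q := by nlinarith
            rw [abs_of_pos (by linarith), abs_of_pos h', abs_of_neg h]; ring
          · exact absurd hpq (by rw [h]; simp)
          · have h' : q < 0 := by nlinarith
            rw [abs_of_neg (by linarith), abs_of_neg h', abs_of_pos h]; ring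
        rw [e3, e1 k, e4]
        calc ‖((A (k+1) - A r) - q • ν) - ((A k - A r) - p • ν)‖
            ≤ ‖(A (k+1) - A r) - q • ν‖ + ‖(A k - A r) - p • ν‖ := norm_sub_le _ _
          _ ≤ Real.tan ε * |q| + Real.tan ε * |p| := add_le_add hF1'.2 hF0.2
          _ = Real.tan ε * (|q| + |p|) := by ring)
end

section
/- The curve θ: [0, ∞) → ℓ² defined by θ(t) = 0 for t ∈ [0,1) and θ(t) = Σ_{j=1}^{k-1} (1/j)·e_j for t ∈ [k-1, k), k ≥ 2 (where e_j is the standard orthonormal basis), is self-contracted, its image is contained in a bounded set, but its length ℓ(θ) is infinite. -/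
open Finset

noncomputable def ell2e (j : ℕ) : lp (fun _ : ℕ => ℝ) 2 := lp.single 2 j (1 : ℝ)

lemma ell2e_orthonormal : Orthonormal ℝ ell2e := by
  rw [orthonormal_iff_ite]
  intro i j
  rw [ell2e, ell2e, lp.inner_single_left]
  rcases eq_or_ne i j with h | h
  · subst h; simp [lp.single_apply]
  · simp [lp.single_apply, h, Ne.symm h]

lemma ell2_norm_sq_sum (S : Finset ℕ) (f : ℕ → ℝ) :
    ‖∑ j ∈ S, f j • ell2e j‖ ^ 2 = ∑ j ∈ S, (f j) ^ 2 := by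
  rw [← real_inner_self_eq_norm_sq, ell2e_orthonormal.inner_sum f f S]
  simp [sq]

noncomputable def ell2a (k : ℕ) : lp (fun _ : ℕ => ℝ) 2 :=
  ∑ j ∈ Finset.Icc 1 k, ((j : ℝ)⁻¹) • ell2e j

lemma ell2a_dist_sq {l k : ℕ} (h : l ≤ k) :
    dist (ell2a k) (ell2a l) ^ 2 = ∑ j ∈ Finset.Icc (l + 1) k, ((j : ℝ)⁻¹) ^ 2 := by
  have hsub : Finset.Icc 1 l ⊆ Finset.Icc 1 k :=
    Finset.Icc_subset_Icc le_rfl h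
  have hdiff : ell2a k - ell2a l = ∑ j ∈ Finset.Icc (l + 1) k, ((j : ℝ)⁻¹) • ell2e j := by
    rw [ell2a, ell2a, ← Finset.sum_sdiff_eq_sub hsub]
    congr 1
    ext x
    simp only [Finset.mem_sdiff, Finset.mem_Icc]
    omega
  rw [dist_eq_norm, hdiff, ell2_norm_sq_sum]

lemma ell2a_dist_le {l₁ l₂ k : ℕ} (h1 : l₁ ≤ l₂) (h2 : l₂ ≤ k) :
    dist (ell2a k) (ell2a l₂) ≤ dist (ell2a k) (ell2a l₁) := by
  have hsq : dist (ell2a k) (ell2a l₂) ^ 2 ≤ dist (ell2a k) (ell2a l₁) ^ 2 := by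
    rw [ell2a_dist_sq h2, ell2a_dist_sq (h1.trans h2)]
    refine Finset.sum_le_sum_of_subset_of_nonneg ?_ (fun j _ _ => sq_nonneg _)
    exact Finset.Icc_subset_Icc (by omega) le_rfl
  exact le_of_pow_le_pow_left₀ two_ne_zero dist_nonneg hsq

lemma ell2_sum_sq_le (k : ℕ) :
    ∑ j ∈ Finset.Icc 1 k, ((j : ℝ)⁻¹) ^ 2 ≤ 2 - 2 / (k + 1 : ℝ) := by
  induction k with
  | zero => simp
  | succ n ih =>
    rw [Finset.sum_Icc_succ_top (by omega)]
    have hn1 : (0:ℝ) < (n : ℝ) + 1 := by positivity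
    have hn2 : (0:ℝ) < (n : ℝ) + 2 := by positivity
    have key : ((n + 1 : ℕ) : ℝ)⁻¹ ^ 2 ≤ 2 / ((n:ℝ) + 1) - 2 / ((n:ℝ) + 2) := by
      push_cast
      rw [div_sub_div _ _ (ne_of_gt hn1) (ne_of_gt hn2), inv_pow, inv_eq_one_div,
        div_le_div_iff₀ (by positivity) (by positivity)]
      ring_nf
      nlinarith [hn1, hn2]
    push_cast at key ih ⊢
    have h22 : (n:ℝ) + 1 + 1 = (n:ℝ) + 2 := by ring
    rw [h22]
    linarith

lemma ell2a_norm_le (k : ℕ) : ‖ell2a k‖ ≤ 2 := by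
  have h1 : ‖ell2a k‖ ^ 2 = ∑ j ∈ Finset.Icc 1 k, ((j : ℝ)⁻¹) ^ 2 := by
    rw [ell2a, ell2_norm_sq_sum]
  have h2 := ell2_sum_sq_le k
  have h3 : (0:ℝ) < 2 / (k + 1 : ℝ) := by positivity
  nlinarith [norm_nonneg (ell2a k)]

/-- The staircase curve in `ℓ²` given by `θ(t) = Σ_{j=1}^{k} (1/j)·e_j` for
`t ∈ [k, k+1)` is self-contracted on `[0, ∞)`, has bounded image, but has
infinite length. -/
theorem ell2_staircase_infinite_length
    (θ : ℝ → lp (fun _ : ℕ => ℝ) 2)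
    (hθ : ∀ k : ℕ, ∀ t : ℝ, (k : ℝ) ≤ t → t < (k : ℝ) + 1 →
      θ t = ∑ j ∈ Finset.Icc 1 k, ((j : ℝ)⁻¹) • lp.single 2 j (1 : ℝ)) :
    (∀ t₁ t₂ t₃ : ℝ, 0 ≤ t₁ → t₁ ≤ t₂ → t₂ ≤ t₃ →
      dist (θ t₃) (θ t₂) ≤ dist (θ t₃) (θ t₁)) ∧
    Bornology.IsBounded (θ '' Set.Ici 0) ∧
    (∀ M : ℝ, ∃ (m : ℕ) (t : ℕ → ℝ), (∀ j, 0 ≤ t j) ∧ Monotone t ∧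
      M ≤ ∑ j ∈ Finset.range m, dist (θ (t j)) (θ (t (j + 1)))) := by
  have hθ' : ∀ t : ℝ, 0 ≤ t → θ t = ell2a ⌊t⌋₊ := by
    intro t ht
    rw [hθ ⌊t⌋₊ t (Nat.floor_le ht) (Nat.lt_floor_add_one t)]
    rfl
  refine ⟨?_, ?_, ?_⟩
  · intro t₁ t₂ t₃ h0 h12 h23
    rw [hθ' t₁ h0, hθ' t₂ (h0.trans h12), hθ' t₃ (h0.trans (h12.trans h23))]
    exact ell2a_dist_le (Nat.floor_mono h12) (Nat.floor_mono h23)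
  · rw [isBounded_iff_forall_norm_le]
    refine ⟨2, ?_⟩
    rintro x ⟨t, ht, rfl⟩
    rw [hθ' t ht]
    exact ell2a_norm_le _
  · intro M
    obtain ⟨m, hm⟩ := (Filter.tendsto_atTop.mp Real.tendsto_sum_range_one_div_nat_succ_atTop
      M).exists
    refine ⟨m, fun j => (j : ℝ), fun j => Nat.cast_nonneg j, fun a b h => Nat.cast_le.mpr h, ?_⟩
    have : ∀ j : ℕ, dist (θ (j : ℝ)) (θ ((j : ℕ) + 1 : ℝ)) = 1 / ((j : ℝ) + 1) := by
      intro j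
      have h1 : θ ((j : ℝ)) = ell2a j := by
        rw [hθ' _ (Nat.cast_nonneg j), Nat.floor_natCast]
      have h2 : θ (((j+1 : ℕ) : ℝ)) = ell2a (j+1) := by
        rw [hθ' _ (Nat.cast_nonneg (j+1)), Nat.floor_natCast]
      have h3 : ((j : ℝ) + 1) = ((j + 1 : ℕ) : ℝ) := by push_cast; ring
      rw [h3, h1, h2, dist_comm]
      have hsq : dist (ell2a (j+1)) (ell2a j) ^ 2 = (1 / ((j:ℝ) + 1)) ^ 2 := by
        rw [ell2a_dist_sq (Nat.le_succ j), Finset.Icc_self, Finset.sum_singleton]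
        push_cast; ring
      have h4 : (0:ℝ) ≤ 1 / ((j:ℝ) + 1) := by positivity
      have := congrArg Real.sqrt hsq
      rw [Real.sqrt_sq dist_nonneg, Real.sqrt_sq h4] at this
      rw [this]; push_cast; ring
    calc M ≤ ∑ i ∈ Finset.range m, 1 / ((i : ℝ) + 1) := hm
      _ = ∑ j ∈ Finset.range m, dist (θ (j : ℝ)) (θ ((j : ℝ) + 1)) := by
          refine Finset.sum_congr rfl fun j _ => ?_
          rw [this j]
      _ = _ := by
          refine Finset.sum_congr rfl fun j _ => ?_
          norm_num
end

section
/- The curve θ: [0,1] → L²(0,1) defined by θ(t) = 𝟙_{[0,t]} (the indicator function of [0,t]) satisfies ‖θ(t) - θ(s)‖_{L²} = |t - s|^{1/2} for all s, t ∈ [0,1]; consequently θ is a continuous self-contracted curve whose image is compact but which has infinite length. -/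
open MeasureTheory

/-- The curve `θ(t) = 𝟙_{[0,t]}` in `L²` of `(0,1)` satisfies
`dist (θ s) (θ t) = |t - s|^{1/2}`; consequently it is a continuous
self-contracted curve with compact image but infinite length. -/
theorem L2_snowflake_infinite_length
    (μ : Measure ℝ) (hμ : μ = volume.restrict (Set.Ioo (0 : ℝ) 1))
    (θ : ℝ → Lp ℝ 2 μ)
    (hθ : ∀ t ∈ Set.Icc (0 : ℝ) 1,
      (θ t : ℝ → ℝ) =ᵐ[μ] (Set.Icc (0 : ℝ) t).indicator fun _ => (1 : ℝ)) :
    (∀ s ∈ Set.Icc (0 : ℝ) 1, ∀ t ∈ Set.Icc (0 : ℝ) 1,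
      dist (θ s) (θ t) = Real.sqrt |t - s|) ∧
    ContinuousOn θ (Set.Icc 0 1) ∧
    (∀ t₁ ∈ Set.Icc (0 : ℝ) 1, ∀ t₂ ∈ Set.Icc (0 : ℝ) 1,
      ∀ t₃ ∈ Set.Icc (0 : ℝ) 1, t₁ ≤ t₂ → t₂ ≤ t₃ →
      dist (θ t₃) (θ t₂) ≤ dist (θ t₃) (θ t₁)) ∧
    IsCompact (θ '' Set.Icc 0 1) ∧
    (∀ M : ℝ, ∃ (m : ℕ) (t : ℕ → ℝ), (∀ j, t j ∈ Set.Icc (0 : ℝ) 1) ∧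
      Monotone t ∧ M ≤ ∑ j ∈ Finset.range m, dist (θ (t j)) (θ (t (j + 1)))) := by
  -- key distance formula for `s ≤ t`
  have key : ∀ s ∈ Set.Icc (0:ℝ) 1, ∀ t ∈ Set.Icc (0:ℝ) 1, s ≤ t →
      dist (θ s) (θ t) = Real.sqrt (t - s) := by
    intro s hs t ht hst
    have hμIoc : μ (Set.Ioc s t) = ENNReal.ofReal (t - s) := by
      rw [hμ, Measure.restrict_apply measurableSet_Ioc]
      apply le_antisymm
      · calc volume (Set.Ioc s t ∩ Set.Ioo 0 1) ≤ volume (Set.Ioc s t) :=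
              measure_mono Set.inter_subset_left
          _ = ENNReal.ofReal (t - s) := Real.volume_Ioc
      · calc ENNReal.ofReal (t - s) = volume (Set.Ioo s t) := Real.volume_Ioo.symm
          _ ≤ volume (Set.Ioc s t ∩ Set.Ioo 0 1) := by
              apply measure_mono
              rintro x ⟨h1, h2⟩
              exact ⟨⟨h1, h2.le⟩, lt_of_le_of_lt hs.1 h1, lt_of_lt_of_le h2 ht.2⟩
    have hdiff : (⇑(θ t) - ⇑(θ s)) =ᵐ[μ] (Set.Ioc s t).indicator (fun _ => (1:ℝ)) := by
      filter_upwards [hθ t ht, hθ s hs] with x hx1 hx2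
      simp only [Pi.sub_apply, hx1, hx2]
      rcases lt_or_ge s x with h1 | h1
      · rcases le_or_gt x t with h2 | h2
        · rw [Set.indicator_of_mem (Set.mem_Icc.2 ⟨hs.1.trans h1.le, h2⟩),
            Set.indicator_of_notMem (Set.notMem_Icc_of_gt h1),
            Set.indicator_of_mem (Set.mem_Ioc.2 ⟨h1, h2⟩)]
          norm_num
        · rw [Set.indicator_of_notMem (Set.notMem_Icc_of_gt h2),
            Set.indicator_of_notMem (Set.notMem_Icc_of_gt (hst.trans_lt h2)),
            Set.indicator_of_notMem (Set.notMem_Ioc_of_gt h2)]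
          norm_num
      · rw [Set.indicator_of_notMem (Set.notMem_Ioc_of_le h1)]
        by_cases h0 : 0 ≤ x
        · rw [Set.indicator_of_mem (Set.mem_Icc.2 ⟨h0, h1.trans hst⟩),
            Set.indicator_of_mem (Set.mem_Icc.2 ⟨h0, h1⟩)]
          norm_num
        · rw [Set.indicator_of_notMem (Set.notMem_Icc_of_lt (not_le.1 h0)),
            Set.indicator_of_notMem (Set.notMem_Icc_of_lt (not_le.1 h0))]
          norm_num
    rw [dist_comm, Lp.dist_def, eLpNorm_congr_ae hdiff,
      eLpNorm_indicator_const measurableSet_Ioc (by norm_num) (by norm_num), hμIoc]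
    simp only [nnnorm_one, enorm_one, ENNReal.coe_one, one_mul, ENNReal.toReal_ofNat]
    rw [← ENNReal.toReal_rpow, ENNReal.toReal_ofReal (by linarith), Real.sqrt_eq_rpow]
  -- symmetric version
  have key' : ∀ s ∈ Set.Icc (0:ℝ) 1, ∀ t ∈ Set.Icc (0:ℝ) 1,
      dist (θ s) (θ t) = Real.sqrt |t - s| := by
    intro s hs t ht
    rcases le_total s t with h | h
    · rw [key s hs t ht h, abs_of_nonneg (by linarith)]
    · rw [dist_comm, key t ht s hs h, abs_of_nonpos (by linarith)]
      ring_nf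
  have hcont : ContinuousOn θ (Set.Icc 0 1) := by
    rw [Metric.continuousOn_iff]
    intro x hx ε hε
    refine ⟨ε ^ 2, by positivity, fun y hy hxy => ?_⟩
    rw [key' y hy x hx]
    calc Real.sqrt |x - y| < Real.sqrt (ε ^ 2) := by
          apply Real.sqrt_lt_sqrt (abs_nonneg _)
          rwa [abs_sub_comm, ← Real.dist_eq]
      _ = ε := Real.sqrt_sq hε.le
  refine ⟨key', hcont, ?_, isCompact_Icc.image_of_continuousOn hcont, ?_⟩
  · intro t₁ h₁ t₂ h₂ t₃ h₃ h12 h23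
    rw [dist_comm, key t₂ h₂ t₃ h₃ h23, dist_comm, key t₁ h₁ t₃ h₃ (h12.trans h23)]
    exact Real.sqrt_le_sqrt (by linarith)
  · intro M
    obtain ⟨m, hm⟩ := exists_nat_ge (M ^ 2)
    set m' : ℕ := max m 1 with hm'
    have hm'pos : (0:ℝ) < m' := by
      have : 1 ≤ m' := le_max_right m 1
      exact_mod_cast this
    refine ⟨m', fun j => min ((j : ℝ) / m') 1, fun j => ⟨le_min (by positivity) zero_le_one,
      min_le_right _ _⟩, ?_, ?_⟩
    · intro a b hab
      exact min_le_min (by gcongr) le_rfl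
    · have hterm : ∀ j ∈ Finset.range m',
          dist (θ (min ((j:ℝ)/m') 1)) (θ (min (((j:ℝ)+1)/m') 1)) = Real.sqrt (1 / m') := by
        intro j hj
        rw [Finset.mem_range] at hj
        have hj1 : ((j:ℝ)+1)/m' ≤ 1 := by
          rw [div_le_one hm'pos]
          exact_mod_cast Nat.succ_le_of_lt hj
        have hj0 : (j:ℝ)/m' ≤ 1 := le_trans (by gcongr; linarith) hj1
        rw [min_eq_left hj0, min_eq_left hj1,
          key _ ⟨by positivity, hj0⟩ _ ⟨by positivity, hj1⟩ (by gcongr; linarith)]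
        congr 1
        field_simp
        ring
      have hcast : ∀ j : ℕ, ((j+1 : ℕ):ℝ) = (j:ℝ)+1 := by intro j; push_cast; ring
      calc M ≤ Real.sqrt (M ^ 2) := by
              rw [Real.sqrt_sq_eq_abs]; exact le_abs_self M
        _ ≤ Real.sqrt m' := Real.sqrt_le_sqrt (hm.trans (by exact_mod_cast le_max_left m 1))
        _ = (m' : ℝ) * Real.sqrt (1 / m') := by
              rw [one_div, Real.sqrt_inv, ← div_eq_mul_inv, Real.div_sqrt]
        _ = ∑ j ∈ Finset.range m', dist (θ (min ((j:ℝ)/m') 1)) (θ (min (((j:ℝ)+1)/m') 1)) := by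
              rw [Finset.sum_congr rfl hterm, Finset.sum_const, Finset.card_range,
                nsmul_eq_mul]
        _ = ∑ j ∈ Finset.range m', dist (θ (min ((j:ℝ)/m') 1)) (θ (min (((j+1 : ℕ):ℝ)/m') 1)) := by
              simp only [hcast]
end
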